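/- arXiv:2001.06852 — 3 statements merged into one kernel-verified Lean document; each statement's English description precedes it below -/
import Mathlib

section
/- Let W : Ω̄ × ℝ^M → [0,∞) be continuous. Fix λ > 0, ε > 0, x ∈ Ω, and p,q ∈ ℝ^M, and let γ ∈ 𝒜(p,q) be of class C¹ with γ′(s) ≠ 0 for all s ∈ (−1,1). Then there exist τ > 0 with τ ≤ (ε/√λ)·L(γ) and g ∈ C¹((0,τ); [−1,1]) such that (g′(t))² = (λ + W(x, γ(g(t)))) / (ε²|γ′(g(t))|²) for all t ∈ (0,τ), g(0) = −1, g(τ) = 1, and ∫_0^τ [ε^{−1}·W(x, γ(g(t))) + ε·|γ′(g(t))|²·(g′(t))²] dt ≤ ∫_{−1}^1 2√(W(x,γ(s)))·|γ′(s)| ds + 2√λ·∫_{−1}^1 |γ′(s)| ds. -/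
open MeasureTheory Set Filter Topology Metric
open scoped ENNReal NNReal RealInnerProductSpace ContDiff MeasureTheory

noncomputable section

namespace ModicaMortola

variable {N M k : ℕ}

/-- `ℝ^N` as a Euclidean space (the physical domain). -/
abbrev Dom (N : ℕ) := EuclideanSpace ℝ (Fin N)

/-- `ℝ^M` as a Euclidean space (the target of the phase variable). -/
abbrev Tgt (M : ℕ) := EuclideanSpace ℝ (Fin M)

/-- `Ω` has Lipschitz continuous boundary: near every boundary point, in suitable
orthonormal coordinates, `Ω` coincides with the open region above the graph of a
Lipschitz function. -/
def HasLipschitzBoundary (Ω : Set (Dom N)) : Prop :=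
  ∀ x ∈ frontier Ω, ∃ (ρ : ℝ) (ν : Dom N) (f : Dom N → ℝ) (L : ℝ≥0),
    0 < ρ ∧ ‖ν‖ = 1 ∧ LipschitzWith L f ∧
    Ω ∩ ball x ρ = { y ∈ ball x ρ | f (y - ⟪y, ν⟫ • ν) < ⟪y, ν⟫ }

/-! ### Admissible curves and degenerate geodesic distances -/

/-- `(γ, g)` represents a curve in the admissible class `𝒜(p,q)`:
`γ ∈ W^{1,1}((-1,1);ℝ^M)`, identified with its absolutely continuous representative
(with a.e. derivative `g`), with `γ(-1) = p` and `γ(1) = q`. -/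
def IsAdmissible (p q : Tgt M) (γ g : ℝ → Tgt M) : Prop :=
  IntegrableOn g (Ioo (-1 : ℝ) 1) volume ∧
  (∀ t ∈ Icc (-1 : ℝ) 1, γ t = p + ∫ s in Ioc (-1 : ℝ) t, g s) ∧
  γ (-1) = p ∧ γ 1 = q

/-- Euclidean length `L(γ) = ∫_{-1}^1 |γ'(t)| dt` of an admissible curve. -/
def clen (g : ℝ → Tgt M) : ℝ := ∫ t in Ioo (-1 : ℝ) 1, ‖g t‖

/-- The length `∫_{-1}^1 F(γ(t)) |γ'(t)| dt` weighted by a conformal factor `F`. -/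
def wlen (F : Tgt M → ℝ) (γ g : ℝ → Tgt M) : ℝ :=
  ∫ t in Ioo (-1 : ℝ) 1, F (γ t) * ‖g t‖

/-- The (possibly degenerate) geodesic distance `d_F(p,q)`. -/
def dF (F : Tgt M → ℝ) (p q : Tgt M) : ℝ :=
  sInf { r | ∃ γ g, IsAdmissible p q γ g ∧ r = wlen F γ g }

/-- The geodesic distance `d_W(x,p,q)` induced by the conformal factor `2√(W(x,·))`. -/
def dW (W : Dom N → Tgt M → ℝ) (x : Dom N) (p q : Tgt M) : ℝ :=
  dF (fun z => 2 * Real.sqrt (W x z)) p q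

/-! ### The hypotheses (H1)–(H4) on the potential -/

/-- Hypothesis (H1): `W ≥ 0` is Lipschitz on every compact subset of `Ω̄ × ℝ^M` and,
for every `x ∈ Ω̄`, `W(x,p) = 0` iff `p ∈ {z_1(x),…,z_k(x)}`, with `z_i` Lipschitz on `Ω̄`. -/
def HypH1 (Ω : Set (Dom N)) (W : Dom N → Tgt M → ℝ) (z : Fin k → Dom N → Tgt M) : Prop :=
  (∀ x ∈ closure Ω, ∀ p, 0 ≤ W x p) ∧
  (∀ K : Set (Dom N × Tgt M), IsCompact K → K ⊆ (closure Ω) ×ˢ (univ : Set (Tgt M)) →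
    ∃ L : ℝ≥0, LipschitzOnWith L (fun q : Dom N × Tgt M => W q.1 q.2) K) ∧
  (∀ x ∈ closure Ω, ∀ p, W x p = 0 ↔ ∃ i, p = z i x) ∧
  (∀ i, ∃ L : ℝ≥0, LipschitzOnWith L (z i) (closure Ω))

/-- Hypothesis (H2): the wells are uniformly separated by `δ > 0`. -/
def HypH2 (Ω : Set (Dom N)) (z : Fin k → Dom N → Tgt M) (δ : ℝ) : Prop :=
  0 < δ ∧ ∀ x ∈ closure Ω, ∀ i j : Fin k, i ≠ j → δ ≤ ‖z i x - z j x‖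

/-- Hypothesis (H3): `W(x,p) = α_i |p - z_i(x)|²` for `p ∈ B(z_i(x), r)`. -/
def HypH3 (Ω : Set (Dom N)) (W : Dom N → Tgt M → ℝ) (z : Fin k → Dom N → Tgt M)
    (r : ℝ) (α : Fin k → ℝ) : Prop :=
  0 < r ∧ (∀ i, 0 < α i) ∧
    ∀ x ∈ Ω, ∀ (i : Fin k) (p : Tgt M), ‖p - z i x‖ < r → W x p = α i * ‖p - z i x‖ ^ 2

/-- Hypothesis (H4): `W(x,p) ≥ S|p|` for `|p| > R`. -/
def HypH4 (Ω : Set (Dom N)) (W : Dom N → Tgt M → ℝ) (R S : ℝ) : Prop :=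
  0 < R ∧ 0 < S ∧ ∀ x ∈ Ω, ∀ p : Tgt M, R < ‖p‖ → S * ‖p‖ ≤ W x p

/-- Hypothesis (H4′): `W(x,p) ≥ η > 0` whenever `p` lies outside all balls `B(z_i(x), r/2)`. -/
def HypH4' (Ω : Set (Dom N)) (W : Dom N → Tgt M → ℝ) (z : Fin k → Dom N → Tgt M)
    (r η : ℝ) : Prop :=
  0 < η ∧ ∀ x ∈ Ω, ∀ p : Tgt M, (∀ i : Fin k, r / 2 ≤ ‖p - z i x‖) → η ≤ W x p

/-! ### Sobolev functions and the Modica–Mortola functionals -/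

/-- `Du` is a weak (distributional) gradient of `u` on the open set `Ω`. -/
def IsWeakGradOn {G : Type*} [NormedAddCommGroup G] [NormedSpace ℝ G]
    (Ω : Set (Dom N)) (u : Dom N → G) (Du : Dom N → Dom N →L[ℝ] G) : Prop :=
  ∀ φ : Dom N → ℝ, ContDiff ℝ ∞ φ → HasCompactSupport φ → tsupport φ ⊆ Ω →
    ∀ v : Dom N, ∫ x in Ω, fderiv ℝ φ x v • u x = - ∫ x in Ω, φ x • Du x v

/-- `u ∈ H¹(Ω;ℝ^M)` with weak gradient `Du`. -/
def MemH1 (Ω : Set (Dom N)) (u : Dom N → Tgt M) (Du : Dom N → Dom N →L[ℝ] Tgt M) : Prop :=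
  MemLp u 2 (volume.restrict Ω) ∧ MemLp Du 2 (volume.restrict Ω) ∧ IsWeakGradOn Ω u Du

/-- The squared Frobenius norm `|∇u(x)|²` of the gradient. -/
def gradSq (Du : Dom N → Dom N →L[ℝ] Tgt M) (x : Dom N) : ℝ :=
  ∑ i : Fin N, ‖Du x (EuclideanSpace.single i 1)‖ ^ 2

/-- The energy `∫_Ω [ε⁻¹ W(x,u) + ε |∇u|²] dx` computed with a given weak gradient. -/
def energyOf (Ω : Set (Dom N)) (W : Dom N → Tgt M → ℝ) (ε : ℝ)
    (u : Dom N → Tgt M) (Du : Dom N → Dom N →L[ℝ] Tgt M) : ℝ≥0∞ :=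
  ∫⁻ x in Ω, ENNReal.ofReal (ε⁻¹ * W x (u x) + ε * gradSq Du x)

/-- The Modica–Mortola functional `F_ε : L¹(Ω;ℝ^M) → [0,∞]`, equal to `+∞` off `H¹(Ω;ℝ^M)`. -/
def Feps (Ω : Set (Dom N)) (W : Dom N → Tgt M → ℝ) (ε : ℝ) (u : Dom N → Tgt M) : ℝ≥0∞ :=
  sInf { e | ∃ Du, MemH1 Ω u Du ∧ e = energyOf Ω W ε u Du }

/-- Convergence `u_n → v` in `L¹(Ω;ℝ^M)`. -/
def TendstoL1 (Ω : Set (Dom N)) (u : ℕ → Dom N → Tgt M) (v : Dom N → Tgt M) : Prop :=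
  Tendsto (fun n => ∫ x in Ω, ‖u n x - v x‖) atTop (𝓝 0)

/-- The `L¹(Ω;ℝ^M)` distance. -/
def L1dist (Ω : Set (Dom N)) (u v : Dom N → Tgt M) : ℝ :=
  ∫ x in Ω, ‖u x - v x‖

/-! ### BV functions, jump sets and the sharp interface functional -/

/-- Scalar total variation of `f` on `Ω`, defined by duality with `C^∞_c` vector fields. -/
def totalVarScalar (Ω : Set (Dom N)) (f : Dom N → ℝ) : ℝ≥0∞ :=
  ⨆ φ ∈ {φ : Fin N → Dom N → ℝ |
      (∀ i, ContDiff ℝ ∞ (φ i) ∧ HasCompactSupport (φ i) ∧ tsupport (φ i) ⊆ Ω) ∧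
      ∀ x, ∑ i : Fin N, (φ i x) ^ 2 ≤ 1},
    ENNReal.ofReal (∫ x in Ω, f x * ∑ i : Fin N, fderiv ℝ (φ i) x (EuclideanSpace.single i 1))

/-- Total variation `|Du|(Ω)` of a vector-valued `u`, defined by duality. -/
def totalVar (Ω : Set (Dom N)) (u : Dom N → Tgt M) : ℝ≥0∞ :=
  ⨆ φ ∈ {φ : Fin M → Fin N → Dom N → ℝ |
      (∀ j i, ContDiff ℝ ∞ (φ j i) ∧ HasCompactSupport (φ j i) ∧ tsupport (φ j i) ⊆ Ω) ∧
      ∀ x, ∑ j : Fin M, ∑ i : Fin N, (φ j i x) ^ 2 ≤ 1},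
    ENNReal.ofReal (∫ x in Ω,
      ∑ j : Fin M, u x j * ∑ i : Fin N, fderiv ℝ (φ j i) x (EuclideanSpace.single i 1))

/-- `u ∈ BV(Ω;ℝ^M)`. -/
def MemBV (Ω : Set (Dom N)) (u : Dom N → Tgt M) : Prop :=
  IntegrableOn u Ω volume ∧ totalVar Ω u < ⊤

/-- `u ∈ BV(Ω; z_1, …, z_k)`: `u` is of bounded variation and takes values in the wells a.e. -/
def MemBVwells (Ω : Set (Dom N)) (z : Fin k → Dom N → Tgt M) (u : Dom N → Tgt M) : Prop :=
  MemBV Ω u ∧ ∀ᵐ x ∂(volume.restrict Ω), ∃ i, u x = z i x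

/-- `x` is an approximate jump point of `u` with one-sided traces `a, b` and normal `ν`. -/
def JumpAt (u : Dom N → Tgt M) (x : Dom N) (a b : Tgt M) (ν : Dom N) : Prop :=
  a ≠ b ∧ ‖ν‖ = 1 ∧
  Tendsto (fun ρ : ℝ =>
      (ρ ^ N)⁻¹ * ∫ y in {y ∈ ball x ρ | 0 ≤ ⟪y - x, ν⟫}, ‖u y - a‖)
    (𝓝[>] 0) (𝓝 0) ∧
  Tendsto (fun ρ : ℝ =>
      (ρ ^ N)⁻¹ * ∫ y in {y ∈ ball x ρ | ⟪y - x, ν⟫ ≤ 0}, ‖u y - b‖)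
    (𝓝[>] 0) (𝓝 0)

/-- The approximate jump set `J_u`. -/
def jumpSet (u : Dom N → Tgt M) : Set (Dom N) :=
  { x | ∃ a b ν, JumpAt u x a b ν }

open Classical in
/-- The pair of one-sided traces `(u⁺(x), u⁻(x))` at a jump point (an arbitrary admissible
choice; it is unique up to a swap). -/
def jumpVals (u : Dom N → Tgt M) (x : Dom N) : Tgt M × Tgt M :=
  if h : ∃ q : Tgt M × Tgt M × Dom N, JumpAt u x q.1 q.2.1 q.2.2
  then (h.choose.1, h.choose.2.1) else (0, 0)

/-- The interfacial energy `∫_{J_u ∩ Ω} d_W(x, u⁺(x), u⁻(x)) dH^{N-1}(x)`. -/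
def jumpEnergy (Ω : Set (Dom N)) (W : Dom N → Tgt M → ℝ) (u : Dom N → Tgt M) : ℝ≥0∞ :=
  ∫⁻ x in Ω ∩ jumpSet u,
    ENNReal.ofReal (dW W x (jumpVals u x).1 (jumpVals u x).2) ∂(μH[(N : ℝ) - 1])

open Classical in
/-- The sharp interface functional `F_0 : L¹(Ω;ℝ^M) → [0,∞]`. -/
def F0 (Ω : Set (Dom N)) (W : Dom N → Tgt M → ℝ) (z : Fin k → Dom N → Tgt M)
    (u : Dom N → Tgt M) : ℝ≥0∞ :=
  if MemBVwells Ω z u then jumpEnergy Ω W u else ⊤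

open Classical in
/-- The relaxed sharp interface functional `F̃_0`, finite on all functions taking values in
the wells a.e. with finite interfacial energy (no BV requirement). -/
def F0tilde (Ω : Set (Dom N)) (W : Dom N → Tgt M → ℝ) (z : Fin k → Dom N → Tgt M)
    (u : Dom N → Tgt M) : ℝ≥0∞ :=
  if ∀ᵐ x ∂(volume.restrict Ω), ∃ i, u x = z i x then jumpEnergy Ω W u else ⊤

/-! ### Mass constraint, traces, partitions -/

open Classical in
/-- The mass-constrained functional `F_ε^𝓜`. -/
def FepsM (Ω : Set (Dom N)) (W : Dom N → Tgt M → ℝ) (ε : ℝ) (𝓜 : Tgt M)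
    (u : Dom N → Tgt M) : ℝ≥0∞ :=
  if IntegrableOn u Ω volume ∧ (∫ x in Ω, u x) = 𝓜 then Feps Ω W ε u else ⊤

open Classical in
/-- The mass-constrained sharp interface functional `F_0^𝓜`. -/
def F0M (Ω : Set (Dom N)) (W : Dom N → Tgt M → ℝ) (z : Fin k → Dom N → Tgt M)
    (𝓜 : Tgt M) (u : Dom N → Tgt M) : ℝ≥0∞ :=
  if IntegrableOn u Ω volume ∧ (∫ x in Ω, u x) = 𝓜 then F0 Ω W z u else ⊤

/-- `u` has boundary value `a` at the boundary point `x` (Lebesgue point characterization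
of the trace). -/
def HasTraceAt (Ω : Set (Dom N)) (u : Dom N → Tgt M) (x : Dom N) (a : Tgt M) : Prop :=
  Tendsto (fun ρ : ℝ => (ρ ^ N)⁻¹ * ∫ y in Ω ∩ ball x ρ, ‖u y - a‖) (𝓝[>] 0) (𝓝 0)

/-- `Tr u = g` on `∂Ω`, up to an `H^{N-1}`-negligible set. -/
def IsTrace (Ω : Set (Dom N)) (u : Dom N → Tgt M) (g : Dom N → Tgt M) : Prop :=
  ∀ᵐ x ∂((μH[(N : ℝ) - 1]).restrict (frontier Ω)), HasTraceAt Ω u x (g x)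

open Classical in
/-- The trace function `Tr u` on `∂Ω` (an arbitrary admissible choice of boundary values). -/
def traceFun (Ω : Set (Dom N)) (u : Dom N → Tgt M) (x : Dom N) : Tgt M :=
  if h : ∃ a, HasTraceAt Ω u x a then h.choose else 0

open Classical in
/-- The Dirichlet functional `F_ε^D`. -/
def FepsD (Ω : Set (Dom N)) (W : Dom N → Tgt M → ℝ) (ε : ℝ) (g : Dom N → Tgt M)
    (u : Dom N → Tgt M) : ℝ≥0∞ :=
  if IsTrace Ω u g then Feps Ω W ε u else ⊤

/-- The Dirichlet sharp interface functional
`F_0^D(u) = F_0(u) + ∫_{∂Ω} d_W(x, Tr u(x), g(x)) dH^{N-1}(x)`. -/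
def F0D (Ω : Set (Dom N)) (W : Dom N → Tgt M → ℝ) (z : Fin k → Dom N → Tgt M)
    (g : Dom N → Tgt M) (u : Dom N → Tgt M) : ℝ≥0∞ :=
  F0 Ω W z u +
    ∫⁻ x in frontier Ω, ENNReal.ofReal (dW W x (traceFun Ω u x) (g x)) ∂(μH[(N : ℝ) - 1])

/-- `E` has finite perimeter in `Ω`. -/
def HasFinitePerimeterIn (Ω E : Set (Dom N)) : Prop :=
  totalVarScalar Ω (E.indicator fun _ => (1 : ℝ)) < ⊤

/-- `{P i}` is a Caccioppoli partition of `Ω`. -/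
def CaccioppoliPartition (Ω : Set (Dom N)) (P : Fin k → Set (Dom N)) : Prop :=
  (∀ i, P i ⊆ Ω) ∧ (∀ i j, i ≠ j → Disjoint (P i) (P j)) ∧ (⋃ i, P i) = Ω ∧
    ∀ i, HasFinitePerimeterIn Ω (P i)

/-- `E` is a polyhedral set in `Ω`: `∂E ∩ Ω` is contained in finitely many hyperplanes. -/
def IsPolyhedralIn (Ω E : Set (Dom N)) : Prop :=
  ∃ (m : ℕ) (v : Fin m → Dom N) (c : Fin m → ℝ),
    (∀ j, v j ≠ 0) ∧ frontier E ∩ Ω ⊆ ⋃ j, { x | ⟪x, v j⟫ = c j }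

/-- The function `u = Σ_i z_i 1_{P i}` associated with a partition. -/
def partitionFun (z : Fin k → Dom N → Tgt M) (P : Fin k → Set (Dom N)) (x : Dom N) : Tgt M :=
  ∑ i, (P i).indicator (fun y => z i y) x

/-- The point `x` has density `t` for the set `E`. -/
def densityAt (E : Set (Dom N)) (x : Dom N) (t : ℝ≥0∞) : Prop :=
  Tendsto (fun ρ : ℝ => volume (E ∩ ball x ρ) / volume (ball x ρ)) (𝓝[>] 0) (𝓝 t)

/-- The essential boundary `∂*E`. -/
def essBoundary (E : Set (Dom N)) : Set (Dom N) :=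
  { x | ¬ densityAt E x 0 ∧ ¬ densityAt E x 1 }

/-! ### Conformal factors induced by a region `𝓡` -/

/-- `F(z) = min { 2√(W(x,z)) : x ∈ 𝓡 }`. -/
def confFactor (W : Dom N → Tgt M → ℝ) (𝓡 : Set (Dom N)) (p : Tgt M) : ℝ :=
  sInf ((fun x => 2 * Real.sqrt (W x p)) '' 𝓡)

/-- The constant `σ` of Proposition 3.2. -/
def sigmaConst (r δ η : ℝ) (α : Fin k → ℝ) : ℝ :=
  (1 / 2) * min (min r δ) (min ((⨅ i, α i) / (⨆ i, α i) * δ) (Real.sqrt (η / (⨆ i, α i))))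

/-- `Σ_σ(𝓡) = min { F(z) : z ∉ ∪_i 𝒩_{σ/2}(z_i(𝓡)) }`. -/
def SigmaLB (W : Dom N → Tgt M → ℝ) (z : Fin k → Dom N → Tgt M) (𝓡 : Set (Dom N))
    (σ : ℝ) : ℝ :=
  sInf ((confFactor W 𝓡) '' { p : Tgt M | p ∉ ⋃ i, cthickening (σ / 2) (z i '' 𝓡) })

end ModicaMortola

open ModicaMortola

lemma sqrt_add_le_aux {a b : ℝ} (ha : 0 ≤ a) (hb : 0 ≤ b) :
    Real.sqrt (a + b) ≤ Real.sqrt a + Real.sqrt b := by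
  have h := Real.sqrt_le_sqrt (show a + b ≤ (Real.sqrt a + Real.sqrt b) ^ 2 by
    nlinarith [Real.sq_sqrt ha, Real.sq_sqrt hb, Real.sqrt_nonneg a, Real.sqrt_nonneg b])
  rwa [Real.sqrt_sq (by positivity)] at h

/-- **Lemma 6.3 (Modica's reparametrization).** -/
theorem modica_reparametrization
    (N M : ℕ) (Ω : Set (Dom N)) (hΩopen : IsOpen Ω) (hΩbdd : Bornology.IsBounded Ω)
    (W : Dom N → Tgt M → ℝ)
    (hWc : Continuous fun t : Dom N × Tgt M => W t.1 t.2)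
    (hW0 : ∀ x p, 0 ≤ W x p)
    (lam ε : ℝ) (hlam : 0 < lam) (hε : 0 < ε)
    (x : Dom N) (hx : x ∈ Ω) (p q : Tgt M)
    (γ : ℝ → Tgt M) (hγ : ContDiff ℝ 1 γ)
    (hγp : γ (-1) = p) (hγq : γ 1 = q)
    (hγ' : ∀ s ∈ Set.Ioo (-1 : ℝ) 1, deriv γ s ≠ 0) :
    ∃ (τ : ℝ) (g : ℝ → ℝ), 0 < τ ∧
      τ ≤ ε / Real.sqrt lam * ∫ s in Set.Ioo (-1 : ℝ) 1, ‖deriv γ s‖ ∧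
      g 0 = -1 ∧ g τ = 1 ∧
      (∀ t ∈ Set.Icc (0 : ℝ) τ, g t ∈ Set.Icc (-1 : ℝ) 1) ∧
      ContinuousOn g (Set.Icc 0 τ) ∧
      (∀ t ∈ Set.Ioo (0 : ℝ) τ, DifferentiableAt ℝ g t ∧
        (deriv g t) ^ 2 = (lam + W x (γ (g t))) / (ε ^ 2 * ‖deriv γ (g t)‖ ^ 2)) ∧
      (∫ t in Set.Ioo (0 : ℝ) τ,
          (ε⁻¹ * W x (γ (g t)) + ε * ‖deriv γ (g t)‖ ^ 2 * (deriv g t) ^ 2)) ≤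
        (∫ s in Set.Ioo (-1 : ℝ) 1, 2 * Real.sqrt (W x (γ s)) * ‖deriv γ s‖) +
          2 * Real.sqrt lam * ∫ s in Set.Ioo (-1 : ℝ) 1, ‖deriv γ s‖ := by
  classical
  -- Notation
  set c : ℝ → ℝ := fun s => ‖deriv γ s‖ with hc_def
  set h : ℝ → ℝ := fun s => lam + W x (γ s) with hh_def
  set φ : ℝ → ℝ := fun s => ε * c s / Real.sqrt (h s) with hφ_def
  set Ψ : ℝ → ℝ := fun t => ∫ s in (-1 : ℝ)..t, φ s with hΨ_def
  set τ : ℝ := Ψ 1 with hτ_def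
  set g : ℝ → ℝ := Function.invFunOn Ψ (Set.Icc (-1 : ℝ) 1) with hg_def
  -- Basic continuity and positivity facts
  have hγc : Continuous γ := hγ.continuous
  have hc_cont : Continuous c := (hγ.continuous_deriv le_rfl).norm
  have hWγ : Continuous fun s => W x (γ s) :=
    hWc.comp (continuous_const.prodMk hγc)
  have hWγ0 : ∀ s, 0 ≤ W x (γ s) := fun s => hW0 _ _
  have hhpos : ∀ s, 0 < h s := fun s => add_pos_of_pos_of_nonneg hlam (hWγ0 s)
  have hh_cont : Continuous h := continuous_const.add hWγ
  have hsqh : Continuous fun s => Real.sqrt (h s) := hh_cont.sqrt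
  have hsqhpos : ∀ s, 0 < Real.sqrt (h s) := fun s => Real.sqrt_pos.2 (hhpos s)
  have hφ_cont : Continuous φ :=
    (continuous_const.mul hc_cont).div hsqh fun s => (hsqhpos s).ne'
  have hcnn : ∀ s, 0 ≤ c s := fun s => norm_nonneg _
  have hφnn : ∀ s, 0 ≤ φ s := fun s =>
    div_nonneg (mul_nonneg hε.le (hcnn s)) (Real.sqrt_nonneg _)
  have hφpos : ∀ s ∈ Set.Ioo (-1 : ℝ) 1, 0 < φ s := fun s hs =>
    div_pos (mul_pos hε (norm_pos_iff.2 (hγ' s hs))) (hsqhpos s)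
  -- Ψ : fundamental theorem of calculus
  have hΨd : ∀ t : ℝ, HasDerivAt Ψ (φ t) t := fun t =>
    intervalIntegral.integral_hasDerivAt_right (hφ_cont.intervalIntegrable _ _)
      (hφ_cont.stronglyMeasurableAtFilter _ _) hφ_cont.continuousAt
  have hΨc : Continuous Ψ := continuous_iff_continuousAt.2 fun t => (hΨd t).continuousAt
  have hΨm : StrictMonoOn Ψ (Set.Icc (-1 : ℝ) 1) := by
    refine strictMonoOn_of_deriv_pos (convex_Icc _ _) hΨc.continuousOn ?_
    intro s hs
    rw [interior_Icc] at hs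
    rw [(hΨd s).deriv]
    exact hφpos s hs
  have hΨ0 : Ψ (-1) = 0 := intervalIntegral.integral_same
  have hτpos : 0 < τ := by
    rw [hτ_def, hΨ_def]
    exact intervalIntegral.intervalIntegral_pos_of_pos_on
      (hφ_cont.intervalIntegrable _ _) hφpos (by norm_num)
  -- surjectivity of Ψ onto [0, τ]
  have hsurj : ∀ t ∈ Set.Icc (0 : ℝ) τ, ∃ s ∈ Set.Icc (-1 : ℝ) 1, Ψ s = t := by
    intro t ht
    have hIVT := intermediate_value_Icc (by norm_num : (-1 : ℝ) ≤ 1) hΨc.continuousOn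
    rw [hΨ0] at hIVT
    obtain ⟨s, hs, hst⟩ := hIVT ht
    exact ⟨s, hs, hst⟩
  have hgmem : ∀ t ∈ Set.Icc (0 : ℝ) τ, g t ∈ Set.Icc (-1 : ℝ) 1 := fun t ht =>
    Function.invFunOn_mem (hsurj t ht)
  have hΨg : ∀ t ∈ Set.Icc (0 : ℝ) τ, Ψ (g t) = t := fun t ht =>
    Function.invFunOn_eq (hsurj t ht)
  have hinj := hΨm.injOn
  have hgΨ : ∀ s ∈ Set.Icc (-1 : ℝ) 1, g (Ψ s) = s := fun s hs =>
    hinj (Function.invFunOn_apply_mem hs) hs (Function.invFunOn_apply_eq hs)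
  have hg0 : g 0 = -1 := by
    rw [← hΨ0]; exact hgΨ (-1) (by norm_num)
  have hgτ : g τ = 1 := hgΨ 1 (by norm_num)
  have hgm : StrictMonoOn g (Set.Icc 0 τ) := by
    intro t1 h1 t2 h2 h12
    refine (hΨm.lt_iff_lt (hgmem t1 h1) (hgmem t2 h2)).1 ?_
    rw [hΨg t1 h1, hΨg t2 h2]; exact h12
  have hgIoo : ∀ t ∈ Set.Ioo (0 : ℝ) τ, g t ∈ Set.Ioo (-1 : ℝ) 1 := by
    intro t ht
    have h1 : g 0 < g t := hgm ⟨le_refl 0, hτpos.le⟩ ⟨ht.1.le, ht.2.le⟩ ht.1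
    have h2 : g t < g τ := hgm ⟨ht.1.le, ht.2.le⟩ ⟨hτpos.le, le_refl τ⟩ ht.2
    rw [hg0] at h1; rw [hgτ] at h2
    exact ⟨h1, h2⟩
  have hΨmono : MonotoneOn Ψ (Set.Icc (-1 : ℝ) 1) := hΨm.monotoneOn
  have himg : Ψ '' Set.Icc (-1 : ℝ) 1 ⊆ Set.Icc 0 τ := by
    rintro y ⟨s, hs, rfl⟩
    constructor
    · rw [← hΨ0]; exact hΨmono (by norm_num) hs hs.1
    · exact hΨmono hs (by norm_num) hs.2
  -- one-sided continuity of g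
  have hcr : ∀ t ∈ Set.Ico (0 : ℝ) τ, ContinuousWithinAt g (Set.Ici t) t := by
    intro t ht
    refine hgm.continuousWithinAt_right_of_exists_between
      (Icc_mem_nhdsGE_of_mem (⟨ht.1, ht.2⟩ : t ∈ Set.Ico 0 τ)) ?_
    intro b hb
    have htmem : t ∈ Set.Icc (0 : ℝ) τ := ⟨ht.1, ht.2.le⟩
    have hgt1 : g t < 1 := by
      rw [← hgτ]; exact hgm htmem ⟨hτpos.le, le_refl τ⟩ ht.2
    have hgtm : g t ∈ Set.Icc (-1 : ℝ) 1 := hgmem t htmem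
    have hb'mem : min b 1 ∈ Set.Icc (-1 : ℝ) 1 :=
      ⟨le_min (hgtm.1.trans hb.le) (by norm_num), min_le_right _ _⟩
    refine ⟨Ψ (min b 1), himg ⟨_, hb'mem, rfl⟩, ?_⟩
    rw [hgΨ _ hb'mem]
    exact ⟨lt_min hb hgt1, min_le_left _ _⟩
  have hcl : ∀ t ∈ Set.Ioc (0 : ℝ) τ, ContinuousWithinAt g (Set.Iic t) t := by
    intro t ht
    refine hgm.continuousWithinAt_left_of_exists_between
      (Icc_mem_nhdsLE_of_mem (⟨ht.1, ht.2⟩ : t ∈ Set.Ioc 0 τ)) ?_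
    intro b hb
    have htmem : t ∈ Set.Icc (0 : ℝ) τ := ⟨ht.1.le, ht.2⟩
    have hgt1 : -1 < g t := by
      rw [← hg0]; exact hgm ⟨le_refl 0, hτpos.le⟩ htmem ht.1
    have hgtm : g t ∈ Set.Icc (-1 : ℝ) 1 := hgmem t htmem
    have hb'mem : max b (-1) ∈ Set.Icc (-1 : ℝ) 1 :=
      ⟨le_max_right _ _, max_le (hb.le.trans hgtm.2) (by norm_num)⟩
    refine ⟨Ψ (max b (-1)), himg ⟨_, hb'mem, rfl⟩, ?_⟩
    rw [hgΨ _ hb'mem]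
    exact ⟨le_max_left _ _, max_lt hb hgt1⟩
  have hgc : ContinuousOn g (Set.Icc 0 τ) := by
    intro t ht
    rcases eq_or_lt_of_le ht.1 with h0 | h0
    · subst h0
      exact ((hcr 0 ⟨le_refl 0, hτpos⟩).mono Set.Icc_subset_Ici_self)
    rcases eq_or_lt_of_le ht.2 with h1 | h1
    · subst h1
      exact ((hcl τ ⟨h0, le_refl τ⟩).mono Set.Icc_subset_Iic_self)
    · refine ((hcl t ⟨h0, h1.le⟩).union (hcr t ⟨ht.1, h1⟩)).mono ?_
      rw [Set.Iic_union_Ici]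
      exact Set.subset_univ _
  -- differentiability of g on (0, τ)
  have hgd : ∀ t ∈ Set.Ioo (0 : ℝ) τ, HasDerivAt g (φ (g t))⁻¹ t := by
    intro t ht
    have hta : ContinuousAt g t := hgc.continuousAt (Icc_mem_nhds ht.1 ht.2)
    refine HasDerivAt.of_local_left_inverse hta (hΨd (g t))
      (hφpos _ (hgIoo t ht)).ne' ?_
    filter_upwards [Ioo_mem_nhds ht.1 ht.2] with y hy using hΨg y ⟨hy.1.le, hy.2.le⟩
  have hderiv_sq : ∀ t ∈ Set.Ioo (0 : ℝ) τ,
      (deriv g t) ^ 2 = (lam + W x (γ (g t))) / (ε ^ 2 * ‖deriv γ (g t)‖ ^ 2) := by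
    intro t ht
    rw [(hgd t ht).deriv]
    have hcpos : 0 < c (g t) := norm_pos_iff.2 (hγ' _ (hgIoo t ht))
    have hhp := hhpos (g t)
    have hsp := hsqhpos (g t)
    have hsq : Real.sqrt (h (g t)) ^ 2 = h (g t) := Real.sq_sqrt hhp.le
    have e1 : φ (g t) = ε * c (g t) / Real.sqrt (h (g t)) := rfl
    rw [e1, inv_div, div_pow, Real.sq_sqrt hhp.le, mul_pow]
  -- the reparametrized energy identity
  set F : ℝ → ℝ := fun s => ε⁻¹ * (lam + 2 * W x (γ s)) with hF_def
  have hF_cont : Continuous F :=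
    continuous_const.mul (continuous_const.add (continuous_const.mul hWγ))
  have key : (∫ t in Set.Ioo (0 : ℝ) τ,
      (ε⁻¹ * W x (γ (g t)) + ε * ‖deriv γ (g t)‖ ^ 2 * (deriv g t) ^ 2)) =
      ∫ s in (-1 : ℝ)..1, φ s * F s := by
    have e1 : Set.EqOn
        (fun t => ε⁻¹ * W x (γ (g t)) + ε * ‖deriv γ (g t)‖ ^ 2 * (deriv g t) ^ 2)
        (F ∘ g) (Set.Ioo 0 τ) := by
      intro t ht
      have hq := hderiv_sq t ht
      have hcpos : (0 : ℝ) < ‖deriv γ (g t)‖ := norm_pos_iff.2 (hγ' _ (hgIoo t ht))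
      simp only [Function.comp_apply, hF_def]
      rw [hq]
      field_simp
      ring
    rw [MeasureTheory.setIntegral_congr_fun measurableSet_Ioo e1]
    rw [← MeasureTheory.integral_Ioc_eq_integral_Ioo,
      ← intervalIntegral.integral_of_le hτpos.le]
    have hgcomp : ContinuousOn (F ∘ g) (Ψ '' Set.uIcc (-1 : ℝ) 1) := by
      rw [Set.uIcc_of_le (by norm_num : (-1 : ℝ) ≤ 1)]
      exact (hF_cont.comp_continuousOn hgc).mono himg
    have hcv := intervalIntegral.integral_comp_smul_deriv'
      (f := Ψ) (f' := φ) (g := F ∘ g) (a := -1) (b := 1)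
      (fun s _ => hΨd s) hφ_cont.continuousOn hgcomp
    rw [hΨ0, ← hτ_def] at hcv
    rw [← hcv]
    refine intervalIntegral.integral_congr ?_
    intro s hs
    rw [Set.uIcc_of_le (by norm_num : (-1 : ℝ) ≤ 1)] at hs
    simp only [Function.comp_apply, smul_eq_mul, hgΨ s hs]
  -- integrability on Ioo (-1, 1)
  have hIoo : ∀ {f : ℝ → ℝ}, Continuous f → IntegrableOn f (Set.Ioo (-1 : ℝ) 1) volume :=
    fun {f} hf => ((hf.intervalIntegrable (-1) 1).1).mono_set Set.Ioo_subset_Ioc_self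
  refine ⟨τ, g, hτpos, ?_, hg0, hgτ, hgmem, hgc,
    fun t ht => ⟨(hgd t ht).differentiableAt, hderiv_sq t ht⟩, ?_⟩
  · -- τ ≤ ε / √lam * L(γ)
    have hτeq : τ = ∫ s in Set.Ioo (-1 : ℝ) 1, φ s := by
      rw [show τ = ∫ s in (-1 : ℝ)..1, φ s from rfl,
        intervalIntegral.integral_of_le (by norm_num : (-1 : ℝ) ≤ 1),
        MeasureTheory.integral_Ioc_eq_integral_Ioo]
    rw [hτeq]
    have hb : ∫ s in Set.Ioo (-1 : ℝ) 1, φ s ≤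
        ∫ s in Set.Ioo (-1 : ℝ) 1, ε / Real.sqrt lam * c s := by
      refine MeasureTheory.setIntegral_mono_on (hIoo hφ_cont)
        (hIoo (continuous_const.mul hc_cont)) measurableSet_Ioo ?_
      intro s _
      have h1 : Real.sqrt lam ≤ Real.sqrt (h s) :=
        Real.sqrt_le_sqrt (by simp only [hh_def]; linarith [hWγ0 s])
      have h2 : 0 < Real.sqrt lam := Real.sqrt_pos.2 hlam
      calc φ s = ε * c s / Real.sqrt (h s) := rfl
        _ ≤ ε * c s / Real.sqrt lam :=
            div_le_div_of_nonneg_left (mul_nonneg hε.le (hcnn s)) h2 h1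
        _ = ε / Real.sqrt lam * c s := by ring
    calc (∫ s in Set.Ioo (-1 : ℝ) 1, φ s) ≤
        ∫ s in Set.Ioo (-1 : ℝ) 1, ε / Real.sqrt lam * c s := hb
      _ = ε / Real.sqrt lam * ∫ s in Set.Ioo (-1 : ℝ) 1, c s := by
          rw [MeasureTheory.integral_const_mul]
  · -- the energy inequality
    rw [key, intervalIntegral.integral_of_le (by norm_num : (-1 : ℝ) ≤ 1),
      MeasureTheory.integral_Ioc_eq_integral_Ioo]
    have hmono : ∫ s in Set.Ioo (-1 : ℝ) 1, φ s * F s ≤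
        ∫ s in Set.Ioo (-1 : ℝ) 1,
          (2 * Real.sqrt (W x (γ s)) * ‖deriv γ s‖ + 2 * Real.sqrt lam * ‖deriv γ s‖) := by
      refine MeasureTheory.setIntegral_mono_on (hIoo (hφ_cont.mul hF_cont))
        (hIoo (((continuous_const.mul (hWγ.sqrt)).mul hc_cont).add
          (continuous_const.mul hc_cont))) measurableSet_Ioo ?_
      intro s _
      have hA := hsqhpos s
      have hA2 : Real.sqrt (h s) ^ 2 = h s := Real.sq_sqrt (hhpos s).le
      have hWs := hWγ0 s
      have hsub : Real.sqrt (h s) ≤ Real.sqrt lam + Real.sqrt (W x (γ s)) := by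
        rw [hh_def]
        exact sqrt_add_le_aux hlam.le hWs
      have hident : φ s * F s =
          c s * (lam + 2 * W x (γ s)) / Real.sqrt (h s) := by
        rw [show φ s * F s =
          (ε * c s / Real.sqrt (h s)) * (ε⁻¹ * (lam + 2 * W x (γ s))) from rfl]
        field_simp
      rw [hident, div_le_iff₀ hA]
      have hcn := hcnn s
      have hsl : (0 : ℝ) ≤ Real.sqrt lam := Real.sqrt_nonneg _
      have hsw : (0 : ℝ) ≤ Real.sqrt (W x (γ s)) := Real.sqrt_nonneg _
      have step1 : c s * (lam + 2 * W x (γ s)) ≤ 2 * c s * h s := by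
        have h1 : lam + 2 * W x (γ s) ≤ 2 * h s := by
          rw [show h s = lam + W x (γ s) from rfl]; linarith
        calc c s * (lam + 2 * W x (γ s)) ≤ c s * (2 * h s) :=
              mul_le_mul_of_nonneg_left h1 hcn
          _ = 2 * c s * h s := by ring
      have step2 : 2 * c s * h s ≤
          2 * c s * ((Real.sqrt lam + Real.sqrt (W x (γ s))) * Real.sqrt (h s)) := by
        have h2 : h s = Real.sqrt (h s) * Real.sqrt (h s) :=
          (Real.mul_self_sqrt (hhpos s).le).symm
        calc 2 * c s * h s
            = 2 * c s * (Real.sqrt (h s) * Real.sqrt (h s)) := by rw [← h2]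
          _ ≤ 2 * c s * ((Real.sqrt lam + Real.sqrt (W x (γ s))) * Real.sqrt (h s)) :=
              mul_le_mul_of_nonneg_left
                (mul_le_mul_of_nonneg_right hsub hA.le) (by positivity)
      calc c s * (lam + 2 * W x (γ s)) ≤ 2 * c s * h s := step1
        _ ≤ 2 * c s * ((Real.sqrt lam + Real.sqrt (W x (γ s))) * Real.sqrt (h s)) := step2
        _ = (2 * Real.sqrt (W x (γ s)) * c s + 2 * Real.sqrt lam * c s) *
            Real.sqrt (h s) := by ring
    refine hmono.trans (le_of_eq ?_)
    rw [MeasureTheory.integral_add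
      (hIoo (f := fun s => 2 * Real.sqrt (W x (γ s)) * ‖deriv γ s‖)
        ((continuous_const.mul (hWγ.sqrt)).mul hc_cont))
      (hIoo (f := fun s => 2 * Real.sqrt lam * ‖deriv γ s‖) (continuous_const.mul hc_cont)),
      MeasureTheory.integral_const_mul]
end
end

section
/- Let W satisfy (H1)–(H3) and (H4′), let 𝓡 ⊂ Ω be convex compact with 𝒩_{δ/2}(z_i(𝓡)) ∩ 𝒩_{δ/2}(z_j(𝓡)) = ∅ for i ≠ j, let F(z) := min{2√(W(x,z)) : x ∈ 𝓡}, and let σ := (1/2)·min{r, δ, (min_i α_i / max_i α_i)·δ, √(η / max_i α_i)}. Then for every i ∈ {1,…,k} and every z ∈ ℝ^M with dist(z, z_i(𝓡)) ≤ σ one has F(z) = 2√(α_i)·dist(z, z_i(𝓡)). -/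
open MeasureTheory Set Filter Topology Metric
open scoped ENNReal NNReal RealInnerProductSpace ContDiff MeasureTheory

noncomputable section

open ModicaMortola

/-- **Step 1 of Proposition 3.2.** Near the well image `z_i(𝓡)`, the conformal factor
`F(z) = min_{x∈𝓡} 2√(W(x,z))` coincides with `2√(α_i) dist(z, z_i(𝓡))`. -/
theorem confFactor_eq_dist_near_wells
    (N M k : ℕ) [NeZero k] (hN : 2 ≤ N)
    (Ω : Set (Dom N)) (hΩopen : IsOpen Ω) (hΩbdd : Bornology.IsBounded Ω)
    (hΩlip : HasLipschitzBoundary Ω)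
    (W : Dom N → Tgt M → ℝ) (z : Fin k → Dom N → Tgt M)
    (δ r η : ℝ) (α : Fin k → ℝ)
    (h1 : HypH1 Ω W z) (h2 : HypH2 Ω z δ) (h3 : HypH3 Ω W z r α)
    (h4' : HypH4' Ω W z r η)
    (𝓡 : Set (Dom N)) (h𝓡c : IsCompact 𝓡) (h𝓡conv : Convex ℝ 𝓡) (h𝓡sub : 𝓡 ⊆ Ω)
    (hsep : ∀ i j : Fin k, i ≠ j →
      Disjoint (cthickening (δ / 2) (z i '' 𝓡)) (cthickening (δ / 2) (z j '' 𝓡))) :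
    ∀ (i : Fin k) (p : Tgt M), infDist p (z i '' 𝓡) ≤ sigmaConst r δ η α →
      confFactor W 𝓡 p = 2 * Real.sqrt (α i) * infDist p (z i '' 𝓡) := by
  obtain ⟨hW0, _, _, hzLip⟩ := h1
  obtain ⟨hδ, _⟩ := h2
  obtain ⟨hr, hα, hW3⟩ := h3
  obtain ⟨hη, hW4⟩ := h4'
  intro i p hpσ
  rcases 𝓡.eq_empty_or_nonempty with h𝓡 | h𝓡
  · simp [confFactor, h𝓡, Metric.infDist_empty, Real.sInf_empty]
  set a : ℝ := ⨅ j, α j with ha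
  set b : ℝ := ⨆ j, α j with hb
  have hbddB : BddBelow (Set.range α) := (Set.finite_range α).bddBelow
  have hbddA : BddAbove (Set.range α) := (Set.finite_range α).bddAbove
  have ha_le : ∀ j, a ≤ α j := fun j => ciInf_le hbddB j
  have hle_b : ∀ j, α j ≤ b := fun j => le_ciSup hbddA j
  have ha_pos : 0 < a := by
    obtain ⟨j, hj⟩ := exists_eq_ciInf_of_finite (f := α)
    rw [ha, ← hj]; exact hα j
  have hb_pos : 0 < b := lt_of_lt_of_le (hα i) (hle_b i)
  set σ : ℝ := sigmaConst r δ η α with hσdef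
  have hσeq : σ = (1 / 2) * min (min r δ) (min (a / b * δ) (Real.sqrt (η / b))) := rfl
  set d : ℝ := infDist p (z i '' 𝓡) with hd
  have hd0 : 0 ≤ d := infDist_nonneg
  have hσ0 : 0 ≤ σ := hd0.trans hpσ
  have hσr : σ ≤ r / 2 := by
    have : min (min r δ) (min (a / b * δ) (Real.sqrt (η / b))) ≤ r :=
      le_trans (min_le_left _ _) (min_le_left _ _)
    rw [hσeq]; linarith
  have hσδ : σ ≤ δ / 2 := by
    have : min (min r δ) (min (a / b * δ) (Real.sqrt (η / b))) ≤ δ :=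
      le_trans (min_le_left _ _) (min_le_right _ _)
    rw [hσeq]; linarith
  have hσ3 : σ ≤ (1 / 2) * (a / b * δ) := by
    have : min (min r δ) (min (a / b * δ) (Real.sqrt (η / b))) ≤ a / b * δ :=
      le_trans (min_le_right _ _) (min_le_left _ _)
    rw [hσeq]; linarith
  have hσ4 : σ ≤ (1 / 2) * Real.sqrt (η / b) := by
    have : min (min r δ) (min (a / b * δ) (Real.sqrt (η / b))) ≤ Real.sqrt (η / b) :=
      le_trans (min_le_right _ _) (min_le_right _ _)
    rw [hσeq]; linarith
  -- b σ² ≤ a (δ/2)²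
  have hσb : σ * b ≤ a * (δ / 2) := by
    have h1 : (1 / 2) * (a / b * δ) = (a * (δ / 2)) / b := by field_simp
    have := hσ3; rw [h1] at this
    exact (le_div_iff₀ hb_pos).mp this
  have hbσ2δ : b * σ ^ 2 ≤ a * (δ / 2) ^ 2 := by
    have h2 := mul_le_mul hσb hσδ hσ0 (by positivity : (0:ℝ) ≤ a * (δ / 2))
    nlinarith [h2]
  have hbσ2η : b * σ ^ 2 ≤ η := by
    have hηb : 0 ≤ η / b := le_of_lt (div_pos hη hb_pos)
    have hs := Real.sq_sqrt hηb
    have h2 : σ ^ 2 ≤ (1 / 2 * Real.sqrt (η / b)) ^ 2 := by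
      have h0 : 0 ≤ Real.sqrt (η / b) := Real.sqrt_nonneg _
      nlinarith
    have : b * σ ^ 2 ≤ b * ((1 / 4) * (η / b)) := by nlinarith
    have hb4 : b * ((1 / 4) * (η / b)) = η / 4 := by field_simp
    rw [hb4] at this; linarith
  have hKd : α i * d ^ 2 ≤ b * σ ^ 2 := by
    have h1 : α i * d ^ 2 ≤ b * d ^ 2 := mul_le_mul_of_nonneg_right (hle_b i) (by positivity)
    have h2 : b * d ^ 2 ≤ b * σ ^ 2 :=
      mul_le_mul_of_nonneg_left (pow_le_pow_left₀ hd0 hpσ 2) hb_pos.le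
    linarith
  -- minimizer x₀
  obtain ⟨L, hL⟩ := hzLip i
  have hzc : ContinuousOn (z i) 𝓡 :=
    (hL.continuousOn).mono (h𝓡sub.trans subset_closure)
  have hcpt : IsCompact (z i '' 𝓡) := h𝓡c.image_of_continuousOn hzc
  obtain ⟨y, hy, hyd⟩ := hcpt.exists_infDist_eq_dist (h𝓡.image _) p
  obtain ⟨x₀, hx₀, rfl⟩ := hy
  have hdx₀ : d = ‖p - z i x₀‖ := by rw [hd, hyd, dist_eq_norm]
  have hpin : p ∈ cthickening (δ / 2) (z i '' 𝓡) := by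
    refine mem_cthickening_of_dist_le p (z i x₀) _ _ (mem_image_of_mem _ hx₀) ?_
    rw [dist_eq_norm, ← hdx₀]; exact hpσ.trans hσδ
  -- lower bound on W at every point of 𝓡
  have key : ∀ x ∈ 𝓡, α i * d ^ 2 ≤ W x p := by
    intro x hx
    by_cases hcase : ∀ j, r / 2 ≤ ‖p - z j x‖
    · exact le_trans (hKd.trans hbσ2η) (hW4 x (h𝓡sub hx) p hcase)
    · push_neg at hcase
      obtain ⟨j, hj⟩ := hcase
      have hjr : ‖p - z j x‖ < r := hj.trans_le (by linarith)
      have hWx := hW3 x (h𝓡sub hx) j p hjr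
      by_cases hij : j = i
      · subst hij
        have hdx : d ≤ ‖p - z j x‖ := by
          rw [hd, ← dist_eq_norm]
          exact infDist_le_dist_of_mem (mem_image_of_mem _ hx)
        rw [hWx]
        exact mul_le_mul_of_nonneg_left (pow_le_pow_left₀ hd0 hdx 2) (hα j).le
      · have hnorm : δ / 2 ≤ ‖p - z j x‖ := by
          by_contra hcon
          push_neg at hcon
          have hpj : p ∈ cthickening (δ / 2) (z j '' 𝓡) :=
            mem_cthickening_of_dist_le p (z j x) _ _ (mem_image_of_mem _ hx)
              (by rw [dist_eq_norm]; exact hcon.le)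
          exact (hsep i j (fun h => hij h.symm)).ne_of_mem hpin hpj rfl
        rw [hWx]
        calc α i * d ^ 2 ≤ b * σ ^ 2 := hKd
          _ ≤ a * (δ / 2) ^ 2 := hbσ2δ
          _ ≤ α j * ‖p - z j x‖ ^ 2 :=
            mul_le_mul (ha_le j) (pow_le_pow_left₀ (by linarith) hnorm 2)
              (by positivity) (hα j).le
  -- value achieved at x₀
  have hdr : ‖p - z i x₀‖ < r := by
    rw [← hdx₀]; exact lt_of_le_of_lt (hpσ.trans hσr) (by linarith)
  have hWx₀ : W x₀ p = α i * d ^ 2 := by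
    rw [hW3 x₀ (h𝓡sub hx₀) i p hdr, hdx₀]
  have hsqrt : Real.sqrt (α i * d ^ 2) = Real.sqrt (α i) * d := by
    rw [Real.sqrt_mul (hα i).le, Real.sqrt_sq hd0]
  refine le_antisymm ?_ ?_
  · apply csInf_le ⟨0, ?_⟩ ?_
    · rintro _ ⟨x, hx, rfl⟩
      positivity
    · refine ⟨x₀, hx₀, ?_⟩
      show 2 * Real.sqrt (W x₀ p) = 2 * Real.sqrt (α i) * d
      rw [hWx₀, hsqrt]; ring
  · apply le_csInf ((h𝓡.image _))
    rintro _ ⟨x, hx, rfl⟩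
    have h1 : Real.sqrt (α i) * d ≤ Real.sqrt (W x p) := by
      rw [← hsqrt]; exact Real.sqrt_le_sqrt (key x hx)
    show 2 * Real.sqrt (α i) * d ≤ 2 * Real.sqrt (W x p)
    linarith
end
end

section
/- Under the setting of the previous well-neighborhood identity (W satisfying (H1)–(H3), (H4′), 𝓡 ⊂ Ω convex compact with separated well images, F(z) := min_{x∈𝓡} 2√(W(x,z)), σ as defined), let i ∈ {1,…,k}, let p ∈ ℝ^M with dist(p, z_i(𝓡)) ≤ σ, and let q ∈ z_i(𝓡) realize the distance, i.e. dist(p, z_i(𝓡)) = |p − q|. Then the line segment parametrization ℓ_{p,q}(t) := ((1−t)/2)p + ((1+t)/2)q is a minimizing geodesic for d_F(p,q), and d_F(p,q) = ∫_{−1}^1 F(ℓ_{p,q}(t))|ℓ_{p,q}′(t)| dt = √(α_i)·|p − q|². -/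
open MeasureTheory Set Filter Topology Metric
open scoped ENNReal NNReal RealInnerProductSpace ContDiff MeasureTheory

noncomputable section

open ModicaMortola

section SegAuxSection
open MeasureTheory Set Filter Topology Metric
open scoped ENNReal NNReal

namespace SegAux
open ModicaMortola
variable {N M k : ℕ}

lemma sqrt_sub_sqrt_le {a b : ℝ} (hb : 0 ≤ b) (h : b ≤ a) :
    Real.sqrt a - Real.sqrt b ≤ Real.sqrt (a - b) := by
  nlinarith [Real.sq_sqrt hb, Real.sq_sqrt (hb.trans h), Real.sq_sqrt (sub_nonneg.2 h),
    Real.sqrt_nonneg a, Real.sqrt_nonneg b, Real.sqrt_nonneg (a - b),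
    mul_nonneg (Real.sqrt_nonneg (a - b)) (Real.sqrt_nonneg b),
    sq_nonneg (Real.sqrt a - Real.sqrt b - Real.sqrt (a - b))]

lemma abs_sqrt_sub_sqrt_le {a b : ℝ} (ha : 0 ≤ a) (hb : 0 ≤ b) :
    |Real.sqrt a - Real.sqrt b| ≤ Real.sqrt |a - b| := by
  rcases le_total b a with h | h
  · rw [abs_of_nonneg (sub_nonneg.2 h), abs_of_nonneg (sub_nonneg.2 (Real.sqrt_le_sqrt h))]
    exact sqrt_sub_sqrt_le hb h
  · rw [abs_of_nonpos (sub_nonpos.2 h), abs_of_nonpos (sub_nonpos.2 (Real.sqrt_le_sqrt h)),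
      neg_sub, neg_sub]
    exact sqrt_sub_sqrt_le ha h

section Conf
variable [NeZero k] (W : Dom N → Tgt M → ℝ) (𝓡 : Set (Dom N))

lemma confFactor_nonneg (h𝓡 : 𝓡.Nonempty) (w : Tgt M) : 0 ≤ confFactor W 𝓡 w :=
  le_csInf (h𝓡.image _) (by rintro _ ⟨x, hx, rfl⟩; positivity)

lemma confFactor_le {x : Dom N} (hx : x ∈ 𝓡) (w : Tgt M) :
    confFactor W 𝓡 w ≤ 2 * Real.sqrt (W x w) :=
  csInf_le ⟨0, by rintro _ ⟨y, hy, rfl⟩; positivity⟩ (mem_image_of_mem _ hx)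

variable {r δ η : ℝ} {α : Fin k → ℝ}

lemma sigma_pos (hr : 0 < r) (hδ : 0 < δ) (hη : 0 < η) (hα : ∀ i, 0 < α i) :
    0 < sigmaConst r δ η α := by
  have hm : 0 < ⨅ i, α i := by
    obtain ⟨i₀, hi₀⟩ := Finite.exists_min α
    have : (⨅ i, α i) = α i₀ := le_antisymm (ciInf_le (Finite.bddBelow_range _) i₀) (le_ciInf hi₀)
    rw [this]; exact hα i₀
  have hM : 0 < ⨆ i, α i := by
    obtain ⟨i₀, hi₀⟩ := Finite.exists_max α
    have : (⨆ i, α i) = α i₀ := le_antisymm (ciSup_le hi₀) (le_ciSup (Finite.bddAbove_range _) i₀)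
    rw [this]; exact hα i₀
  have h1 : 0 < (⨅ i, α i) / (⨆ i, α i) * δ := by positivity
  have h2 : 0 < Real.sqrt (η / (⨆ i, α i)) := Real.sqrt_pos.2 (by positivity)
  unfold sigmaConst
  have := lt_min (lt_min hr hδ) (lt_min h1 h2)
  linarith [lt_min (lt_min hr hδ) (lt_min h1 h2)]


lemma iInf_pos' (hα : ∀ i, 0 < α i) : 0 < ⨅ i, α i := by
  obtain ⟨i₀, hi₀⟩ := Finite.exists_min α
  have : (⨅ i, α i) = α i₀ := le_antisymm (ciInf_le (Finite.bddBelow_range _) i₀) (le_ciInf hi₀)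
  rw [this]; exact hα i₀

lemma iSup_pos' (hα : ∀ i, 0 < α i) : 0 < ⨆ i, α i := by
  obtain ⟨i₀, hi₀⟩ := Finite.exists_max α
  have : (⨆ i, α i) = α i₀ := le_antisymm (ciSup_le hi₀) (le_ciSup (Finite.bddAbove_range _) i₀)
  rw [this]; exact hα i₀

lemma sigma_le_half_r : sigmaConst r δ η α ≤ r / 2 := by
  unfold sigmaConst
  nlinarith [min_le_left (min r δ) (min ((⨅ i, α i) / (⨆ i, α i) * δ) (Real.sqrt (η / (⨆ i, α i)))),
    min_le_left r δ]

lemma sigma_le_half_delta : sigmaConst r δ η α ≤ δ / 2 := by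
  unfold sigmaConst
  nlinarith [min_le_left (min r δ) (min ((⨅ i, α i) / (⨆ i, α i) * δ) (Real.sqrt (η / (⨆ i, α i)))),
    min_le_right r δ]

lemma sigma_sq_le_delta (hr : 0 < r) (hδ : 0 < δ) (hη : 0 < η) (hα : ∀ i, 0 < α i)
    (i j : Fin k) : α i * sigmaConst r δ η α ^ 2 ≤ α j * (δ / 2) ^ 2 := by
  set m := ⨅ i, α i with hmdef
  set Mx := ⨆ i, α i with hMdef
  have hm : 0 < m := iInf_pos' hα
  have hM : 0 < Mx := iSup_pos' hα
  have hmM : m ≤ Mx := le_trans (ciInf_le (Finite.bddBelow_range _) i)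
    (le_ciSup (Finite.bddAbove_range _) i)
  have hmj : m ≤ α j := ciInf_le (Finite.bddBelow_range _) j
  have hiM : α i ≤ Mx := le_ciSup (Finite.bddAbove_range _) i
  set σ := sigmaConst r δ η α with hσdef
  have hσ0 : 0 < σ := sigma_pos hr hδ hη hα
  have hσA : σ ≤ m / Mx * δ / 2 := by
    rw [hσdef]; unfold sigmaConst
    have h1 := min_le_right (min r δ) (min (m / Mx * δ) (Real.sqrt (η / Mx)))
    have h2 := min_le_left (m / Mx * δ) (Real.sqrt (η / Mx))
    nlinarith
  have hkey : 2 * Mx * σ ≤ m * δ := by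
    rw [div_mul_eq_mul_div, div_div] at hσA
    rw [le_div_iff₀ (by positivity)] at hσA
    nlinarith
  have h4 : 4 * Mx ^ 2 * σ ^ 2 ≤ m ^ 2 * δ ^ 2 := by
    nlinarith [mul_le_mul hkey hkey (by positivity : (0:ℝ) ≤ 2 * Mx * σ) (by positivity : (0:ℝ) ≤ m * δ)]
  have h5 : α i * σ ^ 2 * (4 * Mx) ≤ α j * (δ / 2) ^ 2 * (4 * Mx) := by
    have h6 : α i * σ ^ 2 ≤ Mx * σ ^ 2 := mul_le_mul_of_nonneg_right hiM (sq_nonneg σ)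
    have h7 : m ^ 2 * δ ^ 2 ≤ (α j * Mx) * δ ^ 2 := by
      nlinarith [mul_le_mul hmj hmM hm.le (hα j).le, sq_nonneg δ]
    nlinarith [mul_le_mul_of_nonneg_right h6 (by positivity : (0:ℝ) ≤ 4 * Mx)]
  exact le_of_mul_le_mul_right h5 (by positivity)

lemma sigma_sq_le_eta (hr : 0 < r) (hδ : 0 < δ) (hη : 0 < η) (hα : ∀ i, 0 < α i)
    (i : Fin k) : α i * sigmaConst r δ η α ^ 2 ≤ η := by
  set Mx := ⨆ i, α i with hMdef
  have hM : 0 < Mx := iSup_pos' hα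
  have hiM : α i ≤ Mx := le_ciSup (Finite.bddAbove_range _) i
  set σ := sigmaConst r δ η α with hσdef
  have hσ0 : 0 < σ := sigma_pos hr hδ hη hα
  have hσB : σ ≤ Real.sqrt (η / Mx) / 2 := by
    rw [hσdef]; unfold sigmaConst
    have h1 := min_le_right (min r δ) (min ((⨅ i, α i) / Mx * δ) (Real.sqrt (η / Mx)))
    have h2 := min_le_right ((⨅ i, α i) / Mx * δ) (Real.sqrt (η / Mx))
    nlinarith
  have hsq : Real.sqrt (η / Mx) ^ 2 = η / Mx := Real.sq_sqrt (by positivity)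
  have h2 : σ ^ 2 ≤ η / Mx / 4 := by nlinarith [Real.sqrt_nonneg (η / Mx)]
  have h3 : Mx * σ ^ 2 ≤ η / 4 := by
    calc Mx * σ ^ 2 ≤ Mx * (η / Mx / 4) := by nlinarith
    _ = η / 4 := by field_simp
  nlinarith [sq_nonneg σ]


variable {Ω : Set (Dom N)} {W : Dom N → Tgt M → ℝ} {z : Fin k → Dom N → Tgt M}

lemma wellImage_compact (h1 : HypH1 Ω W z) (𝓡 : Set (Dom N)) (h𝓡c : IsCompact 𝓡)
    (h𝓡sub : 𝓡 ⊆ Ω) (i : Fin k) : IsCompact (z i '' 𝓡) := by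
  obtain ⟨L, hL⟩ := h1.2.2.2 i
  exact h𝓡c.image_of_continuousOn
    (hL.continuousOn.mono (h𝓡sub.trans subset_closure))

lemma confFactor_lower {δ r η : ℝ} {α : Fin k → ℝ}
    (h1 : HypH1 Ω W z) (h3 : HypH3 Ω W z r α) (h4' : HypH4' Ω W z r η)
    {𝓡 : Set (Dom N)} (h𝓡c : IsCompact 𝓡) (h𝓡sub : 𝓡 ⊆ Ω) (h𝓡ne : 𝓡.Nonempty)
    (hsep : ∀ i j : Fin k, i ≠ j →
      Disjoint (cthickening (δ / 2) (z i '' 𝓡)) (cthickening (δ / 2) (z j '' 𝓡)))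
    (hδ : 0 < δ)
    (i : Fin k) (w : Tgt M) (hw : infDist w (z i '' 𝓡) ≤ sigmaConst r δ η α) :
    2 * Real.sqrt (α i) * infDist w (z i '' 𝓡) ≤ confFactor W 𝓡 w := by
  obtain ⟨hr, hα, hW3⟩ := h3
  obtain ⟨hη, hW4⟩ := h4'
  set σ := sigmaConst r δ η α with hσdef
  set d := infDist w (z i '' 𝓡) with hddef
  have hd0 : 0 ≤ d := infDist_nonneg
  have hkey : ∀ x ∈ 𝓡, α i * d ^ 2 ≤ W x w := by
    intro x hx
    by_cases hcase : ∃ j, ‖w - z j x‖ < r / 2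
    · obtain ⟨j, hj⟩ := hcase
      have hjr : ‖w - z j x‖ < r := hj.trans (by linarith)
      have hWx : W x w = α j * ‖w - z j x‖ ^ 2 := hW3 x (h𝓡sub hx) j w hjr
      by_cases hji : j = i
      · subst hji
        have hdle : d ≤ ‖w - z j x‖ := by
          rw [hddef, ← dist_eq_norm]
          exact infDist_le_dist_of_mem (mem_image_of_mem _ hx)
        rw [hWx]
        exact mul_le_mul_of_nonneg_left (pow_le_pow_left₀ hd0 hdle 2) (hα j).le
      · have hwthick : w ∈ cthickening (δ / 2) (z i '' 𝓡) := by
          obtain ⟨y, hy, hyd⟩ := (wellImage_compact h1 𝓡 h𝓡c h𝓡sub i).exists_infDist_eq_dist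
            (h𝓡ne.image _) w
          exact mem_cthickening_of_dist_le w y _ _ hy
            (by rw [← hyd, ← hddef]; exact hw.trans (sigma_le_half_delta))
        have hfar : δ / 2 < ‖w - z j x‖ := by
          by_contra hle
          push_neg at hle
          have : w ∈ cthickening (δ / 2) (z j '' 𝓡) :=
            mem_cthickening_of_dist_le w (z j x) _ _ (mem_image_of_mem _ hx)
              (by rwa [dist_eq_norm])
          exact Set.disjoint_left.1 (hsep i j (fun h => hji h.symm)) hwthick this
        have hσ2 : α i * σ ^ 2 ≤ α j * (δ / 2) ^ 2 := sigma_sq_le_delta hr hδ hη hα i j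
        rw [hWx]
        have hdσ : d ≤ σ := hw
        have e1 : α i * d ^ 2 ≤ α i * σ ^ 2 :=
          mul_le_mul_of_nonneg_left (pow_le_pow_left₀ hd0 hdσ 2) (hα i).le
        have e2 : α j * (δ / 2) ^ 2 ≤ α j * ‖w - z j x‖ ^ 2 :=
          mul_le_mul_of_nonneg_left (pow_le_pow_left₀ (by positivity) hfar.le 2) (hα j).le
        linarith
    · push_neg at hcase
      have hWη : η ≤ W x w := hW4 x (h𝓡sub hx) w hcase
      have hσ2 : α i * σ ^ 2 ≤ η := sigma_sq_le_eta hr hδ hη hα i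
      have hdσ : d ≤ σ := hw
      have e1 : α i * d ^ 2 ≤ α i * σ ^ 2 :=
        mul_le_mul_of_nonneg_left (pow_le_pow_left₀ hd0 hdσ 2) (hα i).le
      linarith
  refine le_csInf (h𝓡ne.image _) ?_
  rintro _ ⟨x, hx, rfl⟩
  have h1' := hkey x hx
  have : Real.sqrt (α i) * d = Real.sqrt (α i * d ^ 2) := by
    rw [Real.sqrt_mul (hα i).le, Real.sqrt_sq hd0]
  calc 2 * Real.sqrt (α i) * d = 2 * Real.sqrt (α i * d ^ 2) := by rw [mul_assoc, this]
  _ ≤ 2 * Real.sqrt (W x w) := by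
      have := Real.sqrt_le_sqrt h1'
      linarith

lemma confFactor_eq {δ r η : ℝ} {α : Fin k → ℝ}
    (h1 : HypH1 Ω W z) (h3 : HypH3 Ω W z r α) (h4' : HypH4' Ω W z r η)
    {𝓡 : Set (Dom N)} (h𝓡c : IsCompact 𝓡) (h𝓡sub : 𝓡 ⊆ Ω) (h𝓡ne : 𝓡.Nonempty)
    (hsep : ∀ i j : Fin k, i ≠ j →
      Disjoint (cthickening (δ / 2) (z i '' 𝓡)) (cthickening (δ / 2) (z j '' 𝓡)))
    (hδ : 0 < δ)
    (i : Fin k) (w : Tgt M) (hw : infDist w (z i '' 𝓡) ≤ sigmaConst r δ η α) :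
    confFactor W 𝓡 w = 2 * Real.sqrt (α i) * infDist w (z i '' 𝓡) := by
  obtain ⟨hr, hα, hW3⟩ := h3
  refine le_antisymm ?_ (confFactor_lower h1 ⟨hr, hα, hW3⟩ h4' h𝓡c h𝓡sub h𝓡ne hsep hδ i w hw)
  obtain ⟨y, hy, hyd⟩ := (wellImage_compact h1 𝓡 h𝓡c h𝓡sub i).exists_infDist_eq_dist
    (h𝓡ne.image _) w
  obtain ⟨x₀, hx₀, rfl⟩ := hy
  have hdr : ‖w - z i x₀‖ < r := by
    rw [← dist_eq_norm, ← hyd]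
    exact lt_of_le_of_lt hw (lt_of_le_of_lt (sigma_le_half_r) (by linarith))
  have hWx : W x₀ w = α i * ‖w - z i x₀‖ ^ 2 := hW3 x₀ (h𝓡sub hx₀) i w hdr
  calc confFactor W 𝓡 w ≤ 2 * Real.sqrt (W x₀ w) := confFactor_le W 𝓡 hx₀ w
  _ = 2 * Real.sqrt (α i) * infDist w (z i '' 𝓡) := by
      rw [hWx, Real.sqrt_mul (hα i).le, Real.sqrt_sq (norm_nonneg _), hyd, dist_eq_norm,
        mul_assoc]


lemma confFactor_continuous (h1 : HypH1 Ω W z)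
    {𝓡 : Set (Dom N)} (h𝓡c : IsCompact 𝓡) (h𝓡sub : 𝓡 ⊆ Ω) (h𝓡ne : 𝓡.Nonempty) :
    Continuous (confFactor W 𝓡) := by
  rw [continuous_iff_continuousAt]
  intro w₀
  have hsub : 𝓡 ⊆ closure Ω := h𝓡sub.trans subset_closure
  obtain ⟨L, hL⟩ := h1.2.1 (𝓡 ×ˢ closedBall w₀ 1)
    (h𝓡c.prod (isCompact_closedBall _ _))
    (Set.prod_mono hsub (Set.subset_univ _))
  have hWnn : ∀ x ∈ 𝓡, ∀ w, 0 ≤ W x w := fun x hx w => h1.1 x (hsub hx) w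
  -- basic estimate
  have hest : ∀ w1 ∈ closedBall w₀ 1, ∀ w2 ∈ closedBall w₀ 1,
      confFactor W 𝓡 w1 ≤ confFactor W 𝓡 w2 + 2 * Real.sqrt (L * dist w1 w2) := by
    intro w1 hw1 w2 hw2
    have key : ∀ x ∈ 𝓡, confFactor W 𝓡 w1 ≤ 2 * Real.sqrt (W x w2)
        + 2 * Real.sqrt (L * dist w1 w2) := by
      intro x hx
      have hd : dist (W x w1) (W x w2) ≤ L * dist w1 w2 := by
        have := hL.dist_le_mul (x, w1) (Set.mk_mem_prod hx hw1) (x, w2)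
          (Set.mk_mem_prod hx hw2)
        simpa [Prod.dist_eq, dist_self, sup_eq_right.mpr dist_nonneg] using this
      have habs : |Real.sqrt (W x w1) - Real.sqrt (W x w2)| ≤
          Real.sqrt (L * dist w1 w2) := by
        refine le_trans (abs_sqrt_sub_sqrt_le (hWnn x hx w1) (hWnn x hx w2)) ?_
        refine Real.sqrt_le_sqrt ?_
        rwa [Real.dist_eq] at hd
      have h2 := abs_le.1 habs
      calc confFactor W 𝓡 w1 ≤ 2 * Real.sqrt (W x w1) := confFactor_le W 𝓡 hx w1
      _ ≤ 2 * Real.sqrt (W x w2) + 2 * Real.sqrt (L * dist w1 w2) := by linarith [h2.2]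
    have : ∀ v ∈ (fun x => 2 * Real.sqrt (W x w2)) '' 𝓡,
        confFactor W 𝓡 w1 - 2 * Real.sqrt (L * dist w1 w2) ≤ v := by
      rintro _ ⟨x, hx, rfl⟩
      dsimp only
      linarith [key x hx]
    have h3 : confFactor W 𝓡 w1 - 2 * Real.sqrt (L * dist w1 w2) ≤ confFactor W 𝓡 w2 :=
      le_csInf (h𝓡ne.image _) this
    linarith
  rw [Metric.continuousAt_iff]
  intro ε hε
  refine ⟨min 1 ((ε / 3) ^ 2 / (L + 1)), by positivity, fun w' hw' => ?_⟩
  have hd1 : dist w' w₀ ≤ 1 := le_of_lt (lt_of_lt_of_le hw' (min_le_left _ _))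
  have hw'mem : w' ∈ closedBall w₀ 1 := by rwa [mem_closedBall]
  have hw₀mem : w₀ ∈ closedBall w₀ 1 := mem_closedBall_self zero_le_one
  have e1 := hest w' hw'mem w₀ hw₀mem
  have e2 := hest w₀ hw₀mem w' hw'mem
  rw [dist_comm w₀ w'] at e2
  have hLd : (L : ℝ) * dist w' w₀ ≤ (ε / 3) ^ 2 := by
    have h4 : dist w' w₀ < (ε / 3) ^ 2 / (L + 1) := lt_of_lt_of_le hw' (min_le_right _ _)
    have h5 : (L : ℝ) * dist w' w₀ ≤ (L + 1) * dist w' w₀ :=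
      mul_le_mul_of_nonneg_right (by linarith [L.coe_nonneg]) dist_nonneg
    have h6 : ((L : ℝ) + 1) * dist w' w₀ ≤ (L + 1) * ((ε / 3) ^ 2 / (L + 1)) :=
      mul_le_mul_of_nonneg_left h4.le (by positivity)
    have h7 : ((L : ℝ) + 1) * ((ε / 3) ^ 2 / (L + 1)) = (ε / 3) ^ 2 := by
      field_simp
    linarith
  have hs : Real.sqrt ((L : ℝ) * dist w' w₀) ≤ ε / 3 := by
    calc Real.sqrt ((L : ℝ) * dist w' w₀) ≤ Real.sqrt ((ε / 3) ^ 2) :=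
      Real.sqrt_le_sqrt hLd
    _ = ε / 3 := Real.sqrt_sq (by positivity)
  rw [Real.dist_eq, abs_lt]
  constructor <;> nlinarith

end Conf

section LemC
variable {M : ℕ}

lemma abs_infDist_sub_le (S : Set (Tgt M)) (x y : Tgt M) :
    |infDist x S - infDist y S| ≤ dist x y := by
  rw [abs_le]
  constructor
  · have := infDist_le_infDist_add_dist (s := S) (x := y) (y := x)
    rw [dist_comm] at this
    linarith
  · linarith [infDist_le_infDist_add_dist (s := S) (x := x) (y := y)]

set_option maxHeartbeats 1000000 in
lemma core_ineq (F : Tgt M → ℝ) (S : Set (Tgt M)) (c σ : ℝ) (hc : 0 ≤ c)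
    (hF0 : ∀ w, 0 ≤ F w)
    (hFlow : ∀ w, infDist w S ≤ σ → 2 * c * infDist w S ≤ F w)
    (Γ g : ℝ → Tgt M)
    (hΓcont : ContinuousOn Γ (Icc (-1) 1))
    (hgint : IntegrableOn (fun t => ‖g t‖) (Icc (-1:ℝ) 1) volume)
    (hmod : ∀ s t : ℝ, -1 ≤ s → s ≤ t → t ≤ 1 → dist (Γ s) (Γ t) ≤ ∫ τ in s..t, ‖g τ‖)
    (hFg : IntegrableOn (fun t => F (Γ t) * ‖g t‖) (Icc (-1:ℝ) 1) volume)
    (a b : ℝ) (ha : -1 ≤ a) (hab : a ≤ b) (hb : b ≤ 1)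
    (hσ : ∀ t ∈ Icc a b, infDist (Γ t) S ≤ σ) :
    c * ((infDist (Γ a) S) ^ 2 - (infDist (Γ b) S) ^ 2)
      ≤ ∫ t in a..b, F (Γ t) * ‖g t‖ := by
  set h : ℝ → ℝ := fun t => infDist (Γ t) S with hhdef
  -- interval integrability helpers
  have hsubI : ∀ u v : ℝ, -1 ≤ u → v ≤ 1 → u ≤ v → Icc u v ⊆ Icc (-1:ℝ) 1 :=
    fun u v hu hv _ => Icc_subset_Icc hu hv
  have hgI : ∀ u v : ℝ, -1 ≤ u → u ≤ v → v ≤ 1 →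
      IntervalIntegrable (fun t => ‖g t‖) volume u v := by
    intro u v hu huv hv
    refine IntegrableOn.intervalIntegrable ?_
    rw [uIcc_of_le huv]
    exact hgint.mono_set (hsubI u v hu hv huv)
  have hFgI : ∀ u v : ℝ, -1 ≤ u → u ≤ v → v ≤ 1 →
      IntervalIntegrable (fun t => F (Γ t) * ‖g t‖) volume u v := by
    intro u v hu huv hv
    refine IntegrableOn.intervalIntegrable ?_
    rw [uIcc_of_le huv]
    exact hFg.mono_set (hsubI u v hu hv huv)
  have hInt2 : ∀ u v : ℝ, -1 ≤ u → u ≤ v → v ≤ 1 → ∀ e : ℝ,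
      IntervalIntegrable (fun t => F (Γ t) * ‖g t‖ + e * ‖g t‖) volume u v := by
    intro u v hu huv hv e
    exact (hFgI u v hu huv hv).add ((hgI u v hu huv hv).const_mul e)
  -- continuity of h on [a,b]
  have hhcont : ContinuousOn h (Icc a b) :=
    (continuous_infDist_pt S).comp_continuousOn (hΓcont.mono (Icc_subset_Icc ha hb))
  have hucont := isCompact_Icc.uniformContinuousOn_of_continuous hhcont
  rw [Metric.uniformContinuousOn_iff] at hucont
  set J : ℝ := ∫ t in a..b, ‖g t‖ with hJdef
  have hJ0 : 0 ≤ J := intervalIntegral.integral_nonneg hab (fun t _ => norm_nonneg _)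
  -- main estimate with epsilon
  have key : ∀ ε : ℝ, 0 < ε →
      c * (h a ^ 2 - h b ^ 2) ≤ (∫ t in a..b, F (Γ t) * ‖g t‖) + ε * J := by
    intro ε hε
    have hε₀ : 0 < ε / (2 * c + 1) := div_pos hε (by linarith)
    obtain ⟨δ₀, hδ₀, hδ₀p⟩ := hucont (ε / (2 * c + 1)) hε₀
    obtain ⟨n, hn⟩ := exists_nat_gt ((b - a) / δ₀)
    have hn1 : 1 ≤ n := by
      by_contra hcon
      push_neg at hcon
      interval_cases n
      simp at hn
      nlinarith [div_nonneg (sub_nonneg.2 hab) hδ₀.le]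
    have hnR : (0:ℝ) < n := by exact_mod_cast hn1
    set msh : ℝ := (b - a) / n with hmshdef
    have hmsh0 : 0 ≤ msh := div_nonneg (by linarith) hnR.le
    have hmshδ : msh < δ₀ := by
      rw [hmshdef, div_lt_iff₀ hnR]
      rw [div_lt_iff₀ hδ₀] at hn
      nlinarith
    set A : ℕ → ℝ := fun j => a + j * msh with hAdef
    have hA0 : A 0 = a := by simp [hAdef]
    have hAn : A n = b := by
      rw [hAdef]
      simp only
      rw [hmshdef]
      field_simp
      ring
    have hAmono : ∀ j : ℕ, A j ≤ A (j + 1) := by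
      intro j
      rw [hAdef]
      simp only
      push_cast
      nlinarith
    have hAmem : ∀ j : ℕ, j ≤ n → A j ∈ Icc a b := by
      intro j hj
      constructor
      · rw [hAdef]; simp only; nlinarith [Nat.cast_nonneg (α := ℝ) j]
      · rw [hAdef]
        simp only
        have hjn : (j : ℝ) ≤ n := by exact_mod_cast hj
        have : (j:ℝ) * msh ≤ n * msh := mul_le_mul_of_nonneg_right hjn hmsh0
        have hnm : (n:ℝ) * msh = b - a := by rw [hmshdef]; field_simp
        linarith
    have hstep : ∀ j : ℕ, A (j + 1) - A j = msh := by
      intro j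
      rw [hAdef]
      simp only
      push_cast
      ring
    -- per-interval bound
    have hterm : ∀ j : ℕ, j < n →
        c * (h (A j) ^ 2 - h (A (j + 1)) ^ 2)
          ≤ ∫ t in A j..A (j + 1), (F (Γ t) * ‖g t‖ + ε * ‖g t‖) := by
      intro j hj
      have hjm := hAmem j hj.le
      have hjm1 := hAmem (j + 1) hj
      have huv : A j ≤ A (j + 1) := hAmono j
      have hu1 : -1 ≤ A j := le_trans ha hjm.1
      have hv1 : A (j + 1) ≤ 1 := le_trans hjm1.2 hb
      set x := h (A j) with hxdef
      set y := h (A (j + 1)) with hydef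
      have hx0 : 0 ≤ x := infDist_nonneg
      have hy0 : 0 ≤ y := infDist_nonneg
      rcases le_or_gt x y with hxy | hxy
      · have : 0 ≤ ∫ t in A j..A (j + 1), (F (Γ t) * ‖g t‖ + ε * ‖g t‖) := by
          refine intervalIntegral.integral_nonneg huv (fun t ht => ?_)
          have := hF0 (Γ t)
          positivity
        have hsq : x ^ 2 ≤ y ^ 2 := pow_le_pow_left₀ hx0 hxy 2
        have := mul_nonneg hc (sub_nonneg.2 hsq)
        nlinarith
      · -- pointwise bound on the subinterval
        have hpt : ∀ t ∈ Icc (A j) (A (j + 1)), 2 * c * x ≤ F (Γ t) + ε := by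
          intro t ht
          have htab : t ∈ Icc a b := ⟨le_trans hjm.1 ht.1, le_trans ht.2 hjm1.2⟩
          have hdist : dist (A j) t < δ₀ := by
            rw [Real.dist_eq, abs_of_nonpos (by linarith [ht.1])]
            linarith [ht.2, hstep j]
          have hhd := hδ₀p (A j) hjm t htab hdist
          rw [Real.dist_eq] at hhd
          have h1 : x ≤ h t + ε / (2 * c + 1) := by
            have := abs_lt.1 hhd
            linarith [this.1]
          have h2 : 2 * c * h t ≤ F (Γ t) := hFlow (Γ t) (hσ t htab)
          have h3 : 2 * c * (ε / (2 * c + 1)) ≤ ε := by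
            have e := mul_le_mul_of_nonneg_right (by linarith : 2 * c ≤ 2 * c + 1) hε₀.le
            have e2 : (2 * c + 1) * (ε / (2 * c + 1)) = ε := by field_simp
            linarith
          calc 2 * c * x ≤ 2 * c * (h t + ε / (2 * c + 1)) := by nlinarith
          _ ≤ F (Γ t) + ε := by
              have : 2 * c * h t + 2 * c * (ε / (2 * c + 1)) ≤ F (Γ t) + ε := by linarith
              linarith [this]
        have hxy' : x - y ≤ ∫ t in A j..A (j + 1), ‖g t‖ := by
          have hd := abs_infDist_sub_le S (Γ (A j)) (Γ (A (j + 1)))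
          have := hmod (A j) (A (j + 1)) hu1 huv hv1
          have h4 := (abs_le.1 hd).2
          rw [hxdef, hydef, hhdef]
          simp only
          linarith
        calc c * (x ^ 2 - y ^ 2) ≤ (2 * c * x) * (x - y) := by
              nlinarith [mul_nonneg hc (mul_nonneg (sub_nonneg.2 hxy.le) (sub_nonneg.2 hxy.le))]
        _ ≤ (2 * c * x) * ∫ t in A j..A (j + 1), ‖g t‖ := by
            exact mul_le_mul_of_nonneg_left hxy' (mul_nonneg (by linarith) hx0)
        _ = ∫ t in A j..A (j + 1), (2 * c * x) * ‖g t‖ := by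
            rw [intervalIntegral.integral_const_mul]
        _ ≤ ∫ t in A j..A (j + 1), (F (Γ t) * ‖g t‖ + ε * ‖g t‖) := by
            refine intervalIntegral.integral_mono_on huv
              ((hgI _ _ hu1 huv hv1).const_mul _) (hInt2 _ _ hu1 huv hv1 ε)
              (fun t ht => ?_)
            have := hpt t ht
            have hg0 := norm_nonneg (g t)
            nlinarith
    -- sum up
    have hsum := intervalIntegral.sum_integral_adjacent_intervals
      (f := fun t => F (Γ t) * ‖g t‖ + ε * ‖g t‖) (μ := volume) (a := A) (n := n)
      (fun j hj => hInt2 _ _ (le_trans ha (hAmem j hj.le).1) (hAmono j)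
        (le_trans (hAmem (j+1) hj).2 hb) ε)
    rw [hA0, hAn] at hsum
    have htele : ∑ j ∈ Finset.range n, (c * h (A j) ^ 2 - c * h (A (j + 1)) ^ 2)
        = c * h a ^ 2 - c * h b ^ 2 := by
      have := Finset.sum_range_sub' (fun j => c * h (A j) ^ 2) n
      rw [hA0, hAn] at this
      exact this
    have hsumle : c * h a ^ 2 - c * h b ^ 2
        ≤ ∫ t in a..b, (F (Γ t) * ‖g t‖ + ε * ‖g t‖) := by
      rw [← htele, ← hsum]
      refine Finset.sum_le_sum (fun j hj => ?_)
      have := hterm j (Finset.mem_range.1 hj)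
      linarith
    have hsplit : ∫ t in a..b, (F (Γ t) * ‖g t‖ + ε * ‖g t‖)
        = (∫ t in a..b, F (Γ t) * ‖g t‖) + ε * J := by
      rw [intervalIntegral.integral_add (hFgI a b ha hab hb)
        ((hgI a b ha hab hb).const_mul ε), intervalIntegral.integral_const_mul]
    rw [hsplit] at hsumle
    linarith
  refine le_of_forall_pos_le_add (fun ε hε => ?_)
  have h1 := key (ε / (J + 1)) (by positivity)
  have h2 : ε / (J + 1) * J ≤ ε := by
    rw [div_mul_eq_mul_div, div_le_iff₀ (by positivity)]
    nlinarith
  linarith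
end LemC

end SegAux

end SegAuxSection

/-- **Step 2 of Proposition 3.2.** If `p ∈ 𝒩_σ(z_i(𝓡))` and `q ∈ z_i(𝓡)` realizes the
distance, then the line segment from `p` to `q` is a minimizing geodesic for `d_F(p,q)`,
with `d_F(p,q) = √(α_i)|p - q|²`. -/
theorem segment_is_minimizing_geodesic
    (N M k : ℕ) [NeZero k] (hN : 2 ≤ N)
    (Ω : Set (Dom N)) (hΩopen : IsOpen Ω) (hΩbdd : Bornology.IsBounded Ω)
    (hΩlip : HasLipschitzBoundary Ω)
    (W : Dom N → Tgt M → ℝ) (z : Fin k → Dom N → Tgt M)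
    (δ r η : ℝ) (α : Fin k → ℝ)
    (h1 : HypH1 Ω W z) (h2 : HypH2 Ω z δ) (h3 : HypH3 Ω W z r α)
    (h4' : HypH4' Ω W z r η)
    (𝓡 : Set (Dom N)) (h𝓡c : IsCompact 𝓡) (h𝓡conv : Convex ℝ 𝓡) (h𝓡sub : 𝓡 ⊆ Ω)
    (hsep : ∀ i j : Fin k, i ≠ j →
      Disjoint (cthickening (δ / 2) (z i '' 𝓡)) (cthickening (δ / 2) (z j '' 𝓡)))
    (i : Fin k) (p q : Tgt M)
    (hp : infDist p (z i '' 𝓡) ≤ sigmaConst r δ η α)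
    (hq : q ∈ z i '' 𝓡) (hpq : ‖p - q‖ = infDist p (z i '' 𝓡)) :
    IsAdmissible p q (fun t => ((1 - t) / 2) • p + ((1 + t) / 2) • q)
      (fun _ => (2⁻¹ : ℝ) • (q - p)) ∧
    wlen (confFactor W 𝓡) (fun t => ((1 - t) / 2) • p + ((1 + t) / 2) • q)
      (fun _ => (2⁻¹ : ℝ) • (q - p)) = dF (confFactor W 𝓡) p q ∧
    dF (confFactor W 𝓡) p q = Real.sqrt (α i) * ‖p - q‖ ^ 2 := by
  classical
  obtain ⟨hr, hα, hW3⟩ := h3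
  have hδ : 0 < δ := h2.1
  have hη : 0 < η := h4'.1
  have h𝓡ne : 𝓡.Nonempty := by obtain ⟨x, hx, -⟩ := hq; exact ⟨x, hx⟩
  set σ := sigmaConst r δ η α with hσdef
  set S := z i '' 𝓡 with hSdef
  set c := Real.sqrt (α i) with hcdef
  have hc0 : 0 ≤ c := Real.sqrt_nonneg _
  set D := ‖p - q‖ with hDdef
  have hD0 : 0 ≤ D := norm_nonneg _
  have hσ0 : 0 < σ := SegAux.sigma_pos hr hδ hη hα
  have hDσ : D ≤ σ := by rw [hpq]; exact hp
  set F := confFactor W 𝓡 with hFdef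
  have hF0 : ∀ w, 0 ≤ F w := SegAux.confFactor_nonneg W 𝓡 h𝓡ne
  have hFlow : ∀ w, infDist w S ≤ σ → 2 * c * infDist w S ≤ F w := fun w hw =>
    SegAux.confFactor_lower h1 ⟨hr, hα, hW3⟩ h4' h𝓡c h𝓡sub h𝓡ne hsep hδ i w hw
  have hFeq : ∀ w, infDist w S ≤ σ → F w = 2 * c * infDist w S := fun w hw =>
    SegAux.confFactor_eq h1 ⟨hr, hα, hW3⟩ h4' h𝓡c h𝓡sub h𝓡ne hsep hδ i w hw
  have hFcont : Continuous F := SegAux.confFactor_continuous h1 h𝓡c h𝓡sub h𝓡ne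
  set ℓ : ℝ → Tgt M := fun t => ((1 - t) / 2) • p + ((1 + t) / 2) • q with hℓdef
  set g₀ : ℝ → Tgt M := fun _ => (2⁻¹ : ℝ) • (q - p) with hg₀def
  -- admissibility of the segment
  have hrepr₀ : ∀ t ∈ Icc (-1:ℝ) 1, ℓ t = p + ∫ s in Ioc (-1:ℝ) t, g₀ s := by
    intro t ht
    rw [hg₀def, setIntegral_const, Real.volume_real_Ioc_of_le (by linarith [ht.1] : (-1:ℝ) ≤ t), hℓdef]
    simp only
    rw [smul_smul]
    match_scalars <;> ring
  have hadm : IsAdmissible p q ℓ g₀ := by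
    refine ⟨integrableOn_const measure_Ioo_lt_top.ne, hrepr₀, ?_, ?_⟩
    · rw [hℓdef]; norm_num
    · rw [hℓdef]; norm_num
  -- distance along the segment
  have hdist : ∀ t ∈ Icc (-1:ℝ) 1, infDist (ℓ t) S = (1 - t) / 2 * D := by
    intro t ht
    have hsub1 : ℓ t - q = ((1 - t) / 2) • (p - q) := by
      rw [hℓdef]; simp only; match_scalars <;> ring
    have hsub2 : p - ℓ t = ((1 + t) / 2) • (p - q) := by
      rw [hℓdef]; simp only; match_scalars <;> ring
    have hn1 : dist (ℓ t) q = (1 - t) / 2 * D := by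
      rw [dist_eq_norm, hsub1, norm_smul, Real.norm_eq_abs,
        abs_of_nonneg (by linarith [ht.2] : (0:ℝ) ≤ (1 - t) / 2)]
    have hn2 : dist p (ℓ t) = (1 + t) / 2 * D := by
      rw [dist_eq_norm, hsub2, norm_smul, Real.norm_eq_abs,
        abs_of_nonneg (by linarith [ht.1] : (0:ℝ) ≤ (1 + t) / 2)]
    refine le_antisymm ?_ ?_
    · calc infDist (ℓ t) S ≤ dist (ℓ t) q := infDist_le_dist_of_mem hq
      _ = (1 - t) / 2 * D := hn1
    · have h5 : infDist p S ≤ infDist (ℓ t) S + dist p (ℓ t) := infDist_le_infDist_add_dist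
      rw [← hpq] at h5
      rw [hn2] at h5
      linarith
  -- the weighted length of the segment
  have hwlen : wlen F ℓ g₀ = c * D ^ 2 := by
    have hg₀n : ∀ t : ℝ, ‖g₀ t‖ = D / 2 := by
      intro t
      rw [hg₀def]
      simp only
      rw [norm_smul, Real.norm_eq_abs, abs_of_nonneg (by norm_num : (0:ℝ) ≤ (2:ℝ)⁻¹),
        norm_sub_rev]
      rw [hDdef]; ring
    have hcongr : EqOn (fun t => F (ℓ t) * ‖g₀ t‖) (fun t => c * D ^ 2 / 2 * (1 - t))
        (Ioo (-1:ℝ) 1) := by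
      intro t ht
      have htIcc : t ∈ Icc (-1:ℝ) 1 := Ioo_subset_Icc_self ht
      have hd : infDist (ℓ t) S ≤ σ := by
        rw [hdist t htIcc]
        have h6 : (1 - t) / 2 * D ≤ 1 * D :=
          mul_le_mul_of_nonneg_right (by linarith [htIcc.1]) hD0
        linarith
      simp only
      rw [hFeq (ℓ t) hd, hdist t htIcc, hg₀n t]; ring
    have hwl : wlen F ℓ g₀ = ∫ t in Ioo (-1:ℝ) 1, c * D ^ 2 / 2 * (1 - t) :=
      setIntegral_congr_fun measurableSet_Ioo hcongr
    rw [hwl, ← integral_Ioc_eq_integral_Ioo,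
      ← intervalIntegral.integral_of_le (by norm_num : (-1:ℝ) ≤ 1),
      intervalIntegral.integral_const_mul]
    have h7 : (∫ t in (-1:ℝ)..1, (1 - t)) = 2 := by
      have hid : IntervalIntegrable (fun x : ℝ => x) volume (-1) 1 :=
        continuous_id.intervalIntegrable _ _
      rw [intervalIntegral.integral_sub intervalIntegrable_const hid, integral_id]
      simp
      norm_num
    rw [h7]; ring
  -- lower bound for any admissible curve
  have hlb : ∀ v ∈ {u | ∃ γ g, IsAdmissible p q γ g ∧ u = wlen F γ g}, c * D ^ 2 ≤ v := by
    rintro v ⟨γ, g, ⟨hgint, hrepr, hγm1, hγ1⟩, rfl⟩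
    set Γ : ℝ → Tgt M := fun t => p + ∫ s in Ioc (-1:ℝ) t, g s with hΓdef
    have hrestr : volume.restrict (Ioo (-1:ℝ) 1) = volume.restrict (Icc (-1:ℝ) 1) :=
      Measure.restrict_congr_set Ioo_ae_eq_Icc
    have hgIcc : IntegrableOn g (Icc (-1:ℝ) 1) volume := by
      rw [IntegrableOn, ← hrestr]; exact hgint
    have hnormg : IntegrableOn (fun t => ‖g t‖) (Icc (-1:ℝ) 1) volume := hgIcc.norm
    have hΓcont : ContinuousOn Γ (Icc (-1:ℝ) 1) := by
      rw [hΓdef]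
      exact continuousOn_const.add (intervalIntegral.continuousOn_primitive hgIcc)
    have hΓeq : ∀ t ∈ Icc (-1:ℝ) 1, γ t = Γ t := by
      intro t ht; rw [hΓdef]; exact hrepr t ht
    have hΓm1 : Γ (-1) = p := by rw [hΓdef]; simp
    have hΓ1 : Γ 1 = q := by
      rw [← hΓeq 1 (by norm_num : (1:ℝ) ∈ Icc (-1:ℝ) 1)]; exact hγ1
    have hmod : ∀ s t : ℝ, -1 ≤ s → s ≤ t → t ≤ 1 →
        dist (Γ s) (Γ t) ≤ ∫ τ in s..t, ‖g τ‖ := by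
      intro s t hs hst ht
      have hint1 : IntegrableOn g (Ioc (-1:ℝ) s) volume :=
        hgIcc.mono_set (Ioc_subset_Icc_self.trans (Icc_subset_Icc le_rfl (hst.trans ht)))
      have hint2 : IntegrableOn g (Ioc s t) volume :=
        hgIcc.mono_set (Ioc_subset_Icc_self.trans (Icc_subset_Icc hs ht))
      have hunion : (∫ τ in Ioc (-1:ℝ) s, g τ) + (∫ τ in Ioc s t, g τ)
          = ∫ τ in Ioc (-1:ℝ) t, g τ := by
        rw [← setIntegral_union (Ioc_disjoint_Ioc_of_le le_rfl) measurableSet_Ioc hint1 hint2,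
          Ioc_union_Ioc_eq_Ioc (by linarith) hst]
      have hΓdiff : Γ t - Γ s = ∫ τ in Ioc s t, g τ := by
        rw [hΓdef]; simp only
        rw [← hunion]; abel
      rw [dist_comm, dist_eq_norm, hΓdiff]
      calc ‖∫ τ in Ioc s t, g τ‖ ≤ ∫ τ in Ioc s t, ‖g τ‖ := norm_integral_le_integral_norm _
      _ = ∫ τ in s..t, ‖g τ‖ := (intervalIntegral.integral_of_le hst).symm
    have hFΓcont : ContinuousOn (fun t => F (Γ t)) (Icc (-1:ℝ) 1) :=
      hFcont.comp_continuousOn hΓcont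
    obtain ⟨C, hC⟩ := isCompact_Icc.exists_bound_of_continuousOn hFΓcont
    have hFg : IntegrableOn (fun t => F (Γ t) * ‖g t‖) (Icc (-1:ℝ) 1) volume := by
      refine Integrable.mono' (hnormg.const_mul C) ?_ ?_
      · exact (hFΓcont.aestronglyMeasurable measurableSet_Icc).mul hnormg.1
      · rw [ae_restrict_iff' measurableSet_Icc]
        refine ae_of_all _ (fun t ht => ?_)
        have h1' := hC t ht
        have h2' : F (Γ t) ≤ C := (le_abs_self _).trans (by rwa [Real.norm_eq_abs] at h1')
        rw [Real.norm_eq_abs, abs_of_nonneg (mul_nonneg (hF0 _) (norm_nonneg _))]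
        exact mul_le_mul_of_nonneg_right h2' (norm_nonneg _)
    have hval : wlen F γ g = ∫ t in (-1:ℝ)..1, F (Γ t) * ‖g t‖ := by
      rw [intervalIntegral.integral_of_le (by norm_num : (-1:ℝ) ≤ 1),
        integral_Ioc_eq_integral_Ioo]
      exact setIntegral_congr_fun measurableSet_Ioo
        (fun t ht => by rw [hΓeq t (Ioo_subset_Icc_self ht)])
    have hh1 : infDist (Γ 1) S = 0 := by rw [hΓ1]; exact infDist_zero_of_mem hq
    have hhm1 : infDist (Γ (-1)) S = D := by rw [hΓm1, ← hpq]
    have hII : ∀ u v : ℝ, -1 ≤ u → u ≤ v → v ≤ 1 →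
        IntervalIntegrable (fun t => F (Γ t) * ‖g t‖) volume u v := by
      intro u v hu huv hv
      refine IntegrableOn.intervalIntegrable ?_
      rw [uIcc_of_le huv]
      exact hFg.mono_set (Icc_subset_Icc hu hv)
    by_cases hT : ({t ∈ Icc (-1:ℝ) 1 | σ ≤ infDist (Γ t) S}).Nonempty
    · -- the curve leaves the σ-neighborhood; use the final return segment
      set T := {t ∈ Icc (-1:ℝ) 1 | σ ≤ infDist (Γ t) S} with hTdef
      have hTclosed : IsClosed T := by
        have hTeq : T = Icc (-1:ℝ) 1 ∩ (fun t => infDist (Γ t) S) ⁻¹' (Ici σ) := by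
          rw [hTdef]; rfl
        rw [hTeq]
        exact ((continuous_infDist_pt S).comp_continuousOn
          hΓcont).preimage_isClosed_of_isClosed isClosed_Icc isClosed_Ici
      have hTbdd : BddAbove T := ⟨1, fun t ht => ht.1.2⟩
      set t₁ := sSup T with ht₁def
      have ht₁T : t₁ ∈ T := hTclosed.csSup_mem hT hTbdd
      have ht₁m : t₁ ∈ Icc (-1:ℝ) 1 := ht₁T.1
      have hσt₁ : σ ≤ infDist (Γ t₁) S := ht₁T.2
      have ht₁lt1 : t₁ < 1 := by
        rcases lt_or_eq_of_le ht₁m.2 with hlt | heq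
        · exact hlt
        · exfalso; rw [heq, hh1] at hσt₁; linarith
      have hafter : ∀ t, t₁ < t → t ≤ 1 → infDist (Γ t) S < σ := by
        intro t hlt hle
        by_contra hcon
        push_neg at hcon
        have htT : t ∈ T := ⟨⟨by linarith [ht₁m.1], hle⟩, hcon⟩
        exact absurd (le_csSup hTbdd htT) (not_le.2 hlt)
      have hht₁le : infDist (Γ t₁) S ≤ σ := by
        refine le_of_forall_pos_le_add (fun ε hε => ?_)
        have hcw : ContinuousWithinAt (fun t => infDist (Γ t) S) (Icc (-1:ℝ) 1) t₁ :=
          ((continuous_infDist_pt S).comp_continuousOn hΓcont) t₁ ht₁m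
        rw [Metric.continuousWithinAt_iff] at hcw
        obtain ⟨δ₁, hδ₁, hδ₁p⟩ := hcw ε hε
        set t₂ := min 1 (t₁ + δ₁ / 2) with ht₂def
        have ht₂gt : t₁ < t₂ := lt_min ht₁lt1 (by linarith)
        have ht₂m : t₂ ∈ Icc (-1:ℝ) 1 :=
          ⟨by linarith [ht₁m.1, ht₂gt.le], min_le_left _ _⟩
        have ht₂d : dist t₂ t₁ < δ₁ := by
          rw [Real.dist_eq, abs_of_nonneg (by linarith [ht₂gt.le])]
          have h8 : t₂ ≤ t₁ + δ₁ / 2 := min_le_right _ _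
          linarith
        have h9 := hδ₁p ht₂m ht₂d
        rw [Real.dist_eq] at h9
        have h10 := (abs_lt.1 h9).1
        have h11 := hafter t₂ ht₂gt ht₂m.2
        linarith
      have hIcc' : ∀ t ∈ Icc t₁ 1, infDist (Γ t) S ≤ σ := by
        intro t ht
        rcases eq_or_lt_of_le ht.1 with heq | hlt
        · rw [← heq]; exact hht₁le
        · exact (hafter t hlt ht.2).le
      have hcore := SegAux.core_ineq F S c σ hc0 hF0 hFlow Γ g hΓcont hnormg hmod hFg
        t₁ 1 ht₁m.1 ht₁m.2 le_rfl hIcc'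
      rw [hh1] at hcore
      have hσeq : infDist (Γ t₁) S = σ := le_antisymm hht₁le hσt₁
      rw [hσeq] at hcore
      have hsplit := intervalIntegral.integral_add_adjacent_intervals
        (hII (-1) t₁ le_rfl ht₁m.1 ht₁m.2) (hII t₁ 1 ht₁m.1 ht₁m.2 le_rfl)
      have hfirst : 0 ≤ ∫ t in (-1:ℝ)..t₁, F (Γ t) * ‖g t‖ :=
        intervalIntegral.integral_nonneg ht₁m.1 (fun t _ => mul_nonneg (hF0 _) (norm_nonneg _))
      rw [hval]
      have hcd : c * D ^ 2 ≤ c * σ ^ 2 :=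
        mul_le_mul_of_nonneg_left (pow_le_pow_left₀ hD0 hDσ 2) hc0
      norm_num at hcore
      linarith
    · -- the curve stays in the σ-neighborhood
      have hσall : ∀ t ∈ Icc (-1:ℝ) 1, infDist (Γ t) S ≤ σ := by
        intro t ht
        by_contra hcon
        push_neg at hcon
        exact hT ⟨t, ht, hcon.le⟩
      have hcore := SegAux.core_ineq F S c σ hc0 hF0 hFlow Γ g hΓcont hnormg hmod hFg
        (-1) 1 le_rfl (by norm_num) le_rfl hσall
      rw [hh1, hhm1] at hcore
      rw [hval]
      norm_num at hcore
      linarith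
  -- conclusion
  have hbdd : BddBelow {u | ∃ γ g, IsAdmissible p q γ g ∧ u = wlen F γ g} := by
    refine ⟨0, ?_⟩
    rintro v ⟨γ, g, hA, rfl⟩
    exact integral_nonneg (fun t => mul_nonneg (hF0 _) (norm_nonneg _))
  have hmem : wlen F ℓ g₀ ∈ {u | ∃ γ g, IsAdmissible p q γ g ∧ u = wlen F γ g} :=
    ⟨ℓ, g₀, hadm, rfl⟩
  have hdFle : dF F p q ≤ c * D ^ 2 := by
    rw [← hwlen]
    exact csInf_le hbdd hmem
  have hdFge : c * D ^ 2 ≤ dF F p q := le_csInf ⟨wlen F ℓ g₀, hmem⟩ hlb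
  have hdF : dF F p q = c * D ^ 2 := le_antisymm hdFle hdFge
  exact ⟨hadm, by rw [hwlen, hdF], hdF⟩
end
end
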